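/- arXiv:1910.07693 — 7 statements merged into one kernel-verified Lean document; each statement's English description precedes it below -/
import Mathlib

section
/- Let n1, n2, m, p be positive natural numbers, let Ã ∈ ℝ^{n1×n2}, B̃ ∈ ℝ^{n1×m}, C̃ ∈ ℝ^{p×n2} be real matrices, let M be a subspace of ℝ^{n2} and N a subspace of ℝ^{n1}. Then there exists a matrix K ∈ ℝ^{m×p} such that (Ã + B̃·K·C̃)(M) ⊆ N if and only if Ã(M) ⊆ N + im(B̃) and Ã(M ∩ ker C̃) ⊆ N. -/
noncomputable section

open Matrix Submodule

section GeneralDefs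

variable {X U Y : Type*} [AddCommGroup X] [Module ℝ X] [AddCommGroup U] [Module ℝ U]
  [AddCommGroup Y] [Module ℝ Y]

/-- `V` is an `(A,B,C,D)`-output nulling subspace. -/
def IsOutputNulling (A : X →ₗ[ℝ] X) (B : U →ₗ[ℝ] X) (C : X →ₗ[ℝ] Y) (D : U →ₗ[ℝ] Y)
    (V : Submodule ℝ X) : Prop :=
  ∀ v ∈ V, ∃ u : U, A v + B u ∈ V ∧ C v + D u = 0

/-- `S` is an `(A,B,C,D)`-input containing subspace. -/
def IsInputContaining (A : X →ₗ[ℝ] X) (B : U →ₗ[ℝ] X) (C : X →ₗ[ℝ] Y) (D : U →ₗ[ℝ] Y)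
    (S : Submodule ℝ X) : Prop :=
  ∀ x ∈ S, ∀ u : U, C x + D u = 0 → A x + B u ∈ S

/-- `Vstar` is the largest `(A,B,C,D)`-output nulling subspace, i.e. `V*(A,B,C,D)`. -/
def IsMaxOutputNulling (A : X →ₗ[ℝ] X) (B : U →ₗ[ℝ] X) (C : X →ₗ[ℝ] Y) (D : U →ₗ[ℝ] Y)
    (Vstar : Submodule ℝ X) : Prop :=
  IsOutputNulling A B C D Vstar ∧ ∀ V, IsOutputNulling A B C D V → V ≤ Vstar

/-- `Sstar` is the smallest `(A,B,C,D)`-input containing subspace, i.e. `S*(A,B,C,D)`. -/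
def IsMinInputContaining (A : X →ₗ[ℝ] X) (B : U →ₗ[ℝ] X) (C : X →ₗ[ℝ] Y) (D : U →ₗ[ℝ] Y)
    (Sstar : Submodule ℝ X) : Prop :=
  IsInputContaining A B C D Sstar ∧ ∀ S, IsInputContaining A B C D S → Sstar ≤ S

/-- `V` is `(A,B,C,D)`-self bounded, where `Vstar` is the largest output nulling subspace:
`V` is output nulling and `V ⊇ V* ∩ B(ker D)`. -/
def IsSelfBounded (A : X →ₗ[ℝ] X) (B : U →ₗ[ℝ] X) (C : X →ₗ[ℝ] Y) (D : U →ₗ[ℝ] Y)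
    (Vstar V : Submodule ℝ X) : Prop :=
  IsOutputNulling A B C D V ∧ Vstar ⊓ (LinearMap.ker D).map B ≤ V

/-- `S` is `(A,B,C,D)`-self hidden, where `Sstar` is the smallest input containing subspace:
`S` is input containing and `S ⊆ S* + C⁻¹(im D)`. -/
def IsSelfHidden (A : X →ₗ[ℝ] X) (B : U →ₗ[ℝ] X) (C : X →ₗ[ℝ] Y) (D : U →ₗ[ℝ] Y)
    (Sstar S : Submodule ℝ X) : Prop :=
  IsInputContaining A B C D S ∧ S ≤ Sstar ⊔ (LinearMap.range D).comap C

/-- `Vm` is the smallest `(A,B,C,D)`-self bounded subspace. -/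
def IsMinSelfBounded (A : X →ₗ[ℝ] X) (B : U →ₗ[ℝ] X) (C : X →ₗ[ℝ] Y) (D : U →ₗ[ℝ] Y)
    (Vstar Vm : Submodule ℝ X) : Prop :=
  IsSelfBounded A B C D Vstar Vm ∧ ∀ V, IsSelfBounded A B C D Vstar V → Vm ≤ V

/-- `SM` is the largest `(A,B,C,D)`-self hidden subspace. -/
def IsMaxSelfHidden (A : X →ₗ[ℝ] X) (B : U →ₗ[ℝ] X) (C : X →ₗ[ℝ] Y) (D : U →ₗ[ℝ] Y)
    (Sstar SM : Submodule ℝ X) : Prop :=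
  IsSelfHidden A B C D Sstar SM ∧ ∀ S, IsSelfHidden A B C D Sstar S → S ≤ SM

end GeneralDefs

section MatrixDefs

variable {n m q p r s : ℕ}

/-- `⟨M|U⟩` : the smallest `M`-invariant subspace containing `U`. -/
def invHull (M : Matrix (Fin n) (Fin n) ℝ) (U : Submodule ℝ (Fin n → ℝ)) :
    Submodule ℝ (Fin n → ℝ) :=
  sInf {W | U ≤ W ∧ ∀ x ∈ W, M.mulVec x ∈ W}

/-- `⟨U|M⟩` : the largest `M`-invariant subspace contained in `U`. -/
def invCore (M : Matrix (Fin n) (Fin n) ℝ) (U : Submodule ℝ (Fin n → ℝ)) :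
    Submodule ℝ (Fin n → ℝ) :=
  sSup {W | W ≤ U ∧ ∀ x ∈ W, M.mulVec x ∈ W}

open scoped Classical in
/-- `σ(M | J₂/J₁)`: the multiset of complex roots (with multiplicity) of the characteristic
polynomial of the map induced by `M` on the quotient `J₂ ⧸ J₁`, for `M`-invariant `J₁ ≤ J₂`. -/
def quotSpec (M : Matrix (Fin n) (Fin n) ℝ)
    (J₁ J₂ : Submodule ℝ (Fin n → ℝ)) : Multiset ℂ :=
  if h : J₁ ≤ J₂ ∧ (∀ x ∈ J₁, M.mulVec x ∈ J₁) ∧ (∀ x ∈ J₂, M.mulVec x ∈ J₂) then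
    (((Submodule.mapQ (J₁.comap J₂.subtype) (J₁.comap J₂.subtype)
        (M.mulVecLin.restrict (p := J₂) (q := J₂) (fun x hx => h.2.2 x hx))
        (fun x hx => h.2.1 x.1 hx)).charpoly).map (algebraMap ℝ ℂ)).roots
  else 0

/-- `σ(M)`: the multiset of complex roots (with multiplicity) of the characteristic
polynomial of the square matrix `M`. -/
def specMat {ι : Type*} [Fintype ι] [DecidableEq ι] (M : Matrix ι ι ℝ) : Multiset ℂ :=
  ((M.charpoly).map (algebraMap ℝ ℂ)).roots

/-- Condition (α). -/
def CondAlpha (B : Matrix (Fin n) (Fin m) ℝ) (H : Matrix (Fin n) (Fin q) ℝ)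
    (Dz : Matrix (Fin r) (Fin m) ℝ) (Gz : Matrix (Fin r) (Fin q) ℝ)
    (V : Submodule ℝ (Fin n → ℝ)) : Prop :=
  ∀ w : Fin q → ℝ, ∃ u : Fin m → ℝ,
    H.mulVec w + B.mulVec u ∈ V ∧ Gz.mulVec w + Dz.mulVec u = 0

/-- Condition (β). -/
def CondBeta (C : Matrix (Fin p) (Fin n) ℝ) (Gy : Matrix (Fin p) (Fin q) ℝ)
    (E : Matrix (Fin r) (Fin n) ℝ) (Gz : Matrix (Fin r) (Fin q) ℝ)
    (S : Submodule ℝ (Fin n → ℝ)) : Prop :=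
  ∀ x ∈ S, ∀ w : Fin q → ℝ, C.mulVec x + Gy.mulVec w = 0 → E.mulVec x + Gz.mulVec w = 0

/-- `(S,V;K)` is a solution triple of DDPDOF. -/
def IsSolutionTriple (A : Matrix (Fin n) (Fin n) ℝ) (B : Matrix (Fin n) (Fin m) ℝ)
    (H : Matrix (Fin n) (Fin q) ℝ) (C : Matrix (Fin p) (Fin n) ℝ)
    (Dy : Matrix (Fin p) (Fin m) ℝ) (Gy : Matrix (Fin p) (Fin q) ℝ)
    (E : Matrix (Fin r) (Fin n) ℝ) (Dz : Matrix (Fin r) (Fin m) ℝ)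
    (Gz : Matrix (Fin r) (Fin q) ℝ)
    (S V : Submodule ℝ (Fin n → ℝ)) (K : Matrix (Fin m) (Fin p) ℝ) : Prop :=
  IsInputContaining A.mulVecLin H.mulVecLin C.mulVecLin Gy.mulVecLin S ∧
  IsOutputNulling A.mulVecLin B.mulVecLin E.mulVecLin Dz.mulVecLin V ∧
  CondAlpha B H Dz Gz V ∧
  CondBeta C Gy E Gz S ∧
  S ≤ V ∧
  IsUnit (1 + K * Dy) ∧
  ∀ x ∈ S, ∀ w : Fin q → ℝ,
    (A + B * K * C).mulVec x + (H + B * K * Gy).mulVec w ∈ V ∧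
    (E + Dz * K * C).mulVec x + (Gz + Dz * K * Gy).mulVec w = 0

/-- `F` is an `(A,B,E,Dz)`-output nulling friend of `V`. -/
def IsONFriend (A : Matrix (Fin n) (Fin n) ℝ) (B : Matrix (Fin n) (Fin m) ℝ)
    (E : Matrix (Fin r) (Fin n) ℝ) (Dz : Matrix (Fin r) (Fin m) ℝ)
    (V : Submodule ℝ (Fin n → ℝ)) (F : Matrix (Fin m) (Fin n) ℝ) : Prop :=
  (∀ v ∈ V, (A + B * F).mulVec v ∈ V) ∧ ∀ v ∈ V, (E + Dz * F).mulVec v = 0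

/-- `G` is an `(A,H,C,Gy)`-input containing friend of `S`. -/
def IsICFriend (A : Matrix (Fin n) (Fin n) ℝ) (H : Matrix (Fin n) (Fin q) ℝ)
    (C : Matrix (Fin p) (Fin n) ℝ) (Gy : Matrix (Fin p) (Fin q) ℝ)
    (S : Submodule ℝ (Fin n → ℝ)) (G : Matrix (Fin n) (Fin p) ℝ) : Prop :=
  (∀ x ∈ S, (A + G * C).mulVec x ∈ S) ∧ LinearMap.range (H + G * Gy).mulVecLin ≤ S

/-- `σfix(V;F)`. -/
def sigmaFixV (A : Matrix (Fin n) (Fin n) ℝ) (B : Matrix (Fin n) (Fin m) ℝ)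
    (Dz : Matrix (Fin r) (Fin m) ℝ) (V : Submodule ℝ (Fin n → ℝ))
    (F : Matrix (Fin m) (Fin n) ℝ) : Multiset ℂ :=
  quotSpec (A + B * F) (V ⊔ invHull A (LinearMap.range B.mulVecLin)) ⊤ +
  quotSpec (A + B * F)
    (invHull (A + B * F) (V ⊓ (LinearMap.ker Dz.mulVecLin).map B.mulVecLin)) V

/-- `σfix(S;G)`. -/
def sigmaFixS (A : Matrix (Fin n) (Fin n) ℝ) (C : Matrix (Fin p) (Fin n) ℝ)
    (Gy : Matrix (Fin p) (Fin q) ℝ) (S : Submodule ℝ (Fin n → ℝ))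
    (G : Matrix (Fin n) (Fin p) ℝ) : Multiset ℂ :=
  quotSpec (A + G * C) S
    (invCore (A + G * C) (S ⊔ (LinearMap.range Gy.mulVecLin).comap C.mulVecLin)) +
  quotSpec (A + G * C) ⊥ (S ⊓ invCore A (LinearMap.ker C.mulVecLin))

/-- `σfix(S,V;G,F) = σfix(V;F) ⊎ σfix(S;G)`. -/
def sigmaFix (A : Matrix (Fin n) (Fin n) ℝ) (B : Matrix (Fin n) (Fin m) ℝ)
    (C : Matrix (Fin p) (Fin n) ℝ) (Gy : Matrix (Fin p) (Fin q) ℝ)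
    (Dz : Matrix (Fin r) (Fin m) ℝ) (S V : Submodule ℝ (Fin n → ℝ))
    (G : Matrix (Fin n) (Fin p) ℝ) (F : Matrix (Fin m) (Fin n) ℝ) : Multiset ℂ :=
  sigmaFixV A B Dz V F + sigmaFixS A C Gy S G

/-- `W = (I - Dy·Dc)⁻¹`. -/
def clW (Dy : Matrix (Fin p) (Fin m) ℝ) (Dc : Matrix (Fin m) (Fin p) ℝ) :
    Matrix (Fin p) (Fin p) ℝ := (1 - Dy * Dc)⁻¹

/-- The closed-loop matrix `Â`. -/
def clA (A : Matrix (Fin n) (Fin n) ℝ) (B : Matrix (Fin n) (Fin m) ℝ)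
    (C : Matrix (Fin p) (Fin n) ℝ) (Dy : Matrix (Fin p) (Fin m) ℝ)
    (Ac : Matrix (Fin s) (Fin s) ℝ) (Bc : Matrix (Fin s) (Fin p) ℝ)
    (Cc : Matrix (Fin m) (Fin s) ℝ) (Dc : Matrix (Fin m) (Fin p) ℝ) :
    Matrix (Fin n ⊕ Fin s) (Fin n ⊕ Fin s) ℝ :=
  Matrix.fromBlocks (A + B * Dc * clW Dy Dc * C) (B * Cc + B * Dc * clW Dy Dc * Dy * Cc)
    (Bc * clW Dy Dc * C) (Ac + Bc * clW Dy Dc * Dy * Cc)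

/-- The closed-loop matrix `Ĥ`. -/
def clH (B : Matrix (Fin n) (Fin m) ℝ) (H : Matrix (Fin n) (Fin q) ℝ)
    (Dy : Matrix (Fin p) (Fin m) ℝ) (Gy : Matrix (Fin p) (Fin q) ℝ)
    (Bc : Matrix (Fin s) (Fin p) ℝ) (Dc : Matrix (Fin m) (Fin p) ℝ) :
    Matrix (Fin n ⊕ Fin s) (Fin q) ℝ :=
  Matrix.fromRows (H + B * Dc * clW Dy Dc * Gy) (Bc * clW Dy Dc * Gy)

/-- The closed-loop matrix `Ĉ`. -/
def clC (C : Matrix (Fin p) (Fin n) ℝ) (Dy : Matrix (Fin p) (Fin m) ℝ)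
    (E : Matrix (Fin r) (Fin n) ℝ) (Dz : Matrix (Fin r) (Fin m) ℝ)
    (Cc : Matrix (Fin m) (Fin s) ℝ) (Dc : Matrix (Fin m) (Fin p) ℝ) :
    Matrix (Fin r) (Fin n ⊕ Fin s) ℝ :=
  Matrix.fromCols (E + Dz * Dc * clW Dy Dc * C) (Dz * Cc + Dz * Dc * clW Dy Dc * Dy * Cc)

/-- The closed-loop matrix `Ĝ`. -/
def clG (Dy : Matrix (Fin p) (Fin m) ℝ) (Gy : Matrix (Fin p) (Fin q) ℝ)
    (Dz : Matrix (Fin r) (Fin m) ℝ) (Gz : Matrix (Fin r) (Fin q) ℝ)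
    (Dc : Matrix (Fin m) (Fin p) ℝ) : Matrix (Fin r) (Fin q) ℝ :=
  Gz + Dz * Dc * clW Dy Dc * Gy

/-- DDPDOF is solvable. -/
def DDPDOFSolvable (A : Matrix (Fin n) (Fin n) ℝ) (B : Matrix (Fin n) (Fin m) ℝ)
    (H : Matrix (Fin n) (Fin q) ℝ) (C : Matrix (Fin p) (Fin n) ℝ)
    (Dy : Matrix (Fin p) (Fin m) ℝ) (Gy : Matrix (Fin p) (Fin q) ℝ)
    (E : Matrix (Fin r) (Fin n) ℝ) (Dz : Matrix (Fin r) (Fin m) ℝ)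
    (Gz : Matrix (Fin r) (Fin q) ℝ) : Prop :=
  ∃ (s : ℕ) (Ac : Matrix (Fin s) (Fin s) ℝ) (Bc : Matrix (Fin s) (Fin p) ℝ)
    (Cc : Matrix (Fin m) (Fin s) ℝ) (Dc : Matrix (Fin m) (Fin p) ℝ),
    IsUnit (1 - Dy * Dc) ∧ clG Dy Gy Dz Gz Dc = 0 ∧
    ∀ k : ℕ, clC C Dy E Dz Cc Dc * clA A B C Dy Ac Bc Cc Dc ^ k * clH B H Dy Gy Bc Dc = 0

end MatrixDefs

end

theorem stmt0 {n1 n2 m p : ℕ} (hn1 : 0 < n1) (hn2 : 0 < n2) (hm : 0 < m) (hp : 0 < p)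
    (At : Matrix (Fin n1) (Fin n2) ℝ) (Bt : Matrix (Fin n1) (Fin m) ℝ)
    (Ct : Matrix (Fin p) (Fin n2) ℝ)
    (M : Submodule ℝ (Fin n2 → ℝ)) (N : Submodule ℝ (Fin n1 → ℝ)) :
    (∃ K : Matrix (Fin m) (Fin p) ℝ, ∀ x ∈ M, (At + Bt * K * Ct).mulVec x ∈ N) ↔
      M.map At.mulVecLin ≤ N ⊔ LinearMap.range Bt.mulVecLin ∧
        (M ⊓ LinearMap.ker Ct.mulVecLin).map At.mulVecLin ≤ N := by

  constructor
  · rintro ⟨K, hK⟩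
    constructor
    · rintro _ ⟨x, hx, rfl⟩
      have h := hK x hx
      have hdec : At.mulVecLin x =
          (At + Bt * K * Ct).mulVec x + Bt.mulVec (-(K * Ct).mulVec x) := by
        simp [Matrix.add_mulVec, Matrix.mulVec_mulVec, Matrix.mulVec_neg,
          Matrix.mulVecLin_apply]
        rw [Matrix.mul_assoc]
        abel
      rw [hdec]
      exact Submodule.add_mem_sup h ⟨-(K * Ct).mulVec x, rfl⟩
    · rintro _ ⟨x, ⟨hxM, hxK⟩, rfl⟩
      have hc : Ct.mulVec x = 0 := hxK
      have h := hK x hxM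
      have : (At + Bt * K * Ct).mulVec x = At.mulVecLin x := by
        simp [Matrix.add_mulVec, ← Matrix.mulVec_mulVec, hc, Matrix.mulVecLin_apply]
      rwa [this] at h
  · rintro ⟨h1, h2⟩
    set c : (↥M) →ₗ[ℝ] (Fin p → ℝ) := Ct.mulVecLin ∘ₗ M.subtype with hc_def
    set f : (↥M) →ₗ[ℝ] ((Fin n1 → ℝ) ⧸ N) := N.mkQ ∘ₗ At.mulVecLin ∘ₗ M.subtype with hf_def
    have hker : LinearMap.ker c ≤ LinearMap.ker f := by
      intro x hx
      have hxk : (x : Fin n2 → ℝ) ∈ LinearMap.ker Ct.mulVecLin := hx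
      have hmem : At.mulVecLin (x : Fin n2 → ℝ) ∈ N :=
        h2 ⟨(x : Fin n2 → ℝ), ⟨x.2, hxk⟩, rfl⟩
      simpa [hf_def, LinearMap.mem_ker, Submodule.Quotient.mk_eq_zero] using hmem
    -- factor f through the range of c
    set g0 : (LinearMap.range c) →ₗ[ℝ] ((Fin n1 → ℝ) ⧸ N) :=
      ((LinearMap.ker c).liftQ f hker) ∘ₗ (c.quotKerEquivRange).symm.toLinearMap with hg0_def
    have hg0 : ∀ x : ↥M, g0 ⟨c x, LinearMap.mem_range_self c x⟩ = f x := by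
      intro x
      have h1' : c.quotKerEquivRange (Submodule.Quotient.mk x) =
          ⟨c x, LinearMap.mem_range_self c x⟩ := by
        ext; simp [LinearMap.quotKerEquivRange]
      have h2' : (c.quotKerEquivRange).symm ⟨c x, LinearMap.mem_range_self c x⟩ =
          Submodule.Quotient.mk x := by
        rw [← h1', LinearEquiv.symm_apply_apply]
      simp [hg0_def, h2']
    set piB : (Fin m → ℝ) →ₗ[ℝ] ((Fin n1 → ℝ) ⧸ N) := N.mkQ ∘ₗ Bt.mulVecLin with hpiB_def
    have hrangef : ∀ x : ↥M, f x ∈ LinearMap.range piB := by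
      intro x
      have := h1 ⟨(x : Fin n2 → ℝ), x.2, rfl⟩
      obtain ⟨nn, hnn, b, ⟨u, rfl⟩, hsum⟩ := Submodule.mem_sup.mp this
      refine ⟨u, ?_⟩
      simp only [hpiB_def, hf_def, LinearMap.comp_apply, Submodule.mkQ_apply,
        Submodule.subtype_apply]
      rw [← hsum, Submodule.Quotient.mk_add, (Submodule.Quotient.mk_eq_zero N).mpr hnn, zero_add]
    have hg0r : ∀ y : LinearMap.range c, g0 y ∈ LinearMap.range piB := by
      rintro ⟨y, x, rfl⟩
      rw [hg0 x]
      exact hrangef x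
    set g0' : (LinearMap.range c) →ₗ[ℝ] (LinearMap.range piB) :=
      g0.codRestrict (LinearMap.range piB) hg0r with hg0'_def
    obtain ⟨s, hs⟩ := piB.rangeRestrict.exists_rightInverse_of_surjective
      (LinearMap.range_rangeRestrict piB)
    have hsprop : ∀ y : LinearMap.range piB, piB (s y) = (y : (Fin n1 → ℝ) ⧸ N) := by
      intro y
      have := congrArg (fun h => h y) (congrArg DFunLike.coe hs)
      simpa using congrArg Subtype.val this
    obtain ⟨psi, hpsi⟩ := LinearMap.exists_extend (-(s ∘ₗ g0'))
    refine ⟨LinearMap.toMatrix' psi, ?_⟩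
    intro x hx
    have hcx : Ct.mulVec x ∈ LinearMap.range c := ⟨⟨x, hx⟩, rfl⟩
    have hpsival : psi (Ct.mulVec x) = -(s (g0' ⟨Ct.mulVec x, hcx⟩)) := by
      have := congrArg (fun h => h ⟨Ct.mulVec x, hcx⟩) (congrArg DFunLike.coe hpsi)
      simpa using this
    have hmulK : (LinearMap.toMatrix' psi).mulVec (Ct.mulVec x) = psi (Ct.mulVec x) := by
      rw [← Matrix.toLin'_apply, Matrix.toLin'_toMatrix']
    rw [← Submodule.Quotient.mk_eq_zero N]
    have key : N.mkQ ((At + Bt * LinearMap.toMatrix' psi * Ct).mulVec x) = 0 := by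
      have expand : (At + Bt * LinearMap.toMatrix' psi * Ct).mulVec x =
          At.mulVec x + Bt.mulVec (psi (Ct.mulVec x)) := by
        rw [Matrix.add_mulVec, ← Matrix.mulVec_mulVec, ← Matrix.mulVec_mulVec, hmulK]
      rw [expand, map_add]
      have hBpart : N.mkQ (Bt.mulVec (psi (Ct.mulVec x))) = - f ⟨x, hx⟩ := by
        rw [hpsival]
        have : N.mkQ (Bt.mulVec (-(s (g0' ⟨Ct.mulVec x, hcx⟩)))) =
            piB (-(s (g0' ⟨Ct.mulVec x, hcx⟩))) := rfl
        rw [this, map_neg, hsprop]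
        have hcoe : ((g0' ⟨Ct.mulVec x, hcx⟩ : LinearMap.range piB) : (Fin n1 → ℝ) ⧸ N) =
            g0 ⟨Ct.mulVec x, hcx⟩ := rfl
        rw [hcoe]
        have : (⟨Ct.mulVec x, hcx⟩ : LinearMap.range c) =
            ⟨c ⟨x, hx⟩, LinearMap.mem_range_self c ⟨x, hx⟩⟩ := rfl
        rw [this, hg0]
      have hApart : N.mkQ (At.mulVec x) = f ⟨x, hx⟩ := rfl
      rw [hApart, hBpart, add_neg_cancel]
    simpa using key
end

section
/- Let V be an (A,B,E,D_z)-output nulling subspace and S an (A,H,C,G_y)-input containing subspace. If (a) for every w ∈ ℝ^q there exists u ∈ ℝ^m with Hw + Bu ∈ V and G_z w + D_z u = 0; (b) for every x ∈ S and every w ∈ ℝ^q with Cx + G_y w = 0 one has Ex + G_z w = 0; and (c) S ⊆ V; then there exists a matrix K ∈ ℝ^{m×p} such that for all x ∈ S and w ∈ ℝ^q: (A+BKC)x + (H+BK G_y)w ∈ V and (E+D_z K C)x + (G_z + D_z K G_y)w = 0. Conversely, if such a matrix K exists, then (a) and (b) hold. -/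
set_option synthInstance.maxHeartbeats 1000000 in
/-- Abstract key lemma: if `φ₁` vanishes on `ker ψ` and its values can always be cancelled
by `φ₂`, then the cancellation can be done by a linear feedback through `ψ`. -/
theorem key_feedback {Z P M Q : Type*} [AddCommGroup Z] [Module ℝ Z] [AddCommGroup P]
    [Module ℝ P] [AddCommGroup M] [Module ℝ M] [AddCommGroup Q] [Module ℝ Q]
    (ψ : Z →ₗ[ℝ] P) (φ₁ : Z →ₗ[ℝ] Q) (φ₂ : M →ₗ[ℝ] Q)
    (h1 : ∀ z, ψ z = 0 → φ₁ z = 0)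
    (h2 : ∀ z, ∃ u, φ₁ z + φ₂ u = 0) :
    ∃ K : P →ₗ[ℝ] M, ∀ z, φ₁ z + φ₂ (K (ψ z)) = 0 := by
  classical
  set Φ : (Z × M) →ₗ[ℝ] Q := φ₁ ∘ₗ LinearMap.fst ℝ Z M + φ₂ ∘ₗ LinearMap.snd ℝ Z M with hΦ
  set Θ : (Z × M) →ₗ[ℝ] P × M := (ψ ∘ₗ LinearMap.fst ℝ Z M).prod (LinearMap.snd ℝ Z M) with hΘ
  set G : Submodule ℝ (P × M) := (LinearMap.ker Φ).map Θ with hG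
  set f : G →ₗ[ℝ] P := LinearMap.fst ℝ P M ∘ₗ G.subtype with hf
  haveI : Module.Projective ℝ ↥(LinearMap.range f) := Module.Projective.of_free
  obtain ⟨sec, hsec⟩ :=
    f.rangeRestrict.exists_rightInverse_of_surjective (LinearMap.range_rangeRestrict f)
  obtain ⟨W, hW⟩ := Submodule.exists_isCompl (LinearMap.range f)
  set π := (LinearMap.range f).linearProjOfIsCompl W hW with hπ
  refine ⟨LinearMap.snd ℝ P M ∘ₗ G.subtype ∘ₗ sec ∘ₗ π, ?_⟩
  intro z
  obtain ⟨u, hu⟩ := h2 z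
  have hmemG : ((ψ z, u) : P × M) ∈ G := by
    refine ⟨(z, u), ?_, ?_⟩
    · simpa [hΦ] using hu
    · simp [hΘ]
  have hyr : ψ z ∈ LinearMap.range f := ⟨⟨(ψ z, u), hmemG⟩, rfl⟩
  have hπy : π (ψ z) = ⟨ψ z, hyr⟩ :=
    Submodule.linearProjOfIsCompl_apply_left hW ⟨ψ z, hyr⟩
  set g : G := sec ⟨ψ z, hyr⟩ with hg
  have hfg : f g = ψ z := by
    have h := LinearMap.ext_iff.mp hsec ⟨ψ z, hyr⟩
    have := congrArg Subtype.val h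
    simpa [hg] using this
  obtain ⟨zu, hzu, hΘzu⟩ := g.2
  have hval : (g : P × M) = (ψ zu.1, zu.2) := by
    rw [← hΘzu]; simp [hΘ]
  have hfst : ψ zu.1 = ψ z := by
    have h' : (g : P × M).1 = ψ z := hfg
    rw [hval] at h'; exact h'
  have hker : φ₁ z = φ₁ zu.1 := by
    have h' := h1 (z - zu.1) (by simp [map_sub, hfst])
    have h'' : φ₁ z - φ₁ zu.1 = 0 := by simpa [map_sub] using h'
    exact sub_eq_zero.mp h''
  have hKval : (LinearMap.snd ℝ P M ∘ₗ G.subtype ∘ₗ sec ∘ₗ π) (ψ z) = zu.2 := by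
    simp only [LinearMap.comp_apply, hπy, ← hg]
    rw [show (G.subtype g : P × M) = (ψ zu.1, zu.2) from hval]
    rfl
  rw [hKval, hker]
  have : Φ zu = 0 := hzu
  simpa [hΦ] using this

theorem stmt1 {n m q p r : ℕ}
    (A : Matrix (Fin n) (Fin n) ℝ) (B : Matrix (Fin n) (Fin m) ℝ)
    (H : Matrix (Fin n) (Fin q) ℝ) (C : Matrix (Fin p) (Fin n) ℝ)
    (Gy : Matrix (Fin p) (Fin q) ℝ)
    (E : Matrix (Fin r) (Fin n) ℝ) (Dz : Matrix (Fin r) (Fin m) ℝ)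
    (Gz : Matrix (Fin r) (Fin q) ℝ)
    (V S : Submodule ℝ (Fin n → ℝ))
    (hV : IsOutputNulling A.mulVecLin B.mulVecLin E.mulVecLin Dz.mulVecLin V)
    (hS : IsInputContaining A.mulVecLin H.mulVecLin C.mulVecLin Gy.mulVecLin S) :
    ((CondAlpha B H Dz Gz V ∧ CondBeta C Gy E Gz S ∧ S ≤ V) →
      ∃ K : Matrix (Fin m) (Fin p) ℝ, ∀ x ∈ S, ∀ w : Fin q → ℝ,
        (A + B * K * C).mulVec x + (H + B * K * Gy).mulVec w ∈ V ∧
        (E + Dz * K * C).mulVec x + (Gz + Dz * K * Gy).mulVec w = 0) ∧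
    ((∃ K : Matrix (Fin m) (Fin p) ℝ, ∀ x ∈ S, ∀ w : Fin q → ℝ,
        (A + B * K * C).mulVec x + (H + B * K * Gy).mulVec w ∈ V ∧
        (E + Dz * K * C).mulVec x + (Gz + Dz * K * Gy).mulVec w = 0) →
      CondAlpha B H Dz Gz V ∧ CondBeta C Gy E Gz S) := by
  constructor
  · rintro ⟨ha, hb, hsv⟩
    classical
    set ψ : (↥S × (Fin q → ℝ)) →ₗ[ℝ] (Fin p → ℝ) :=
      (C.mulVecLin ∘ₗ S.subtype).coprod Gy.mulVecLin with hψ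
    set φ₁ : (↥S × (Fin q → ℝ)) →ₗ[ℝ] ((Fin n → ℝ) ⧸ V) × (Fin r → ℝ) :=
      (V.mkQ ∘ₗ ((A.mulVecLin ∘ₗ S.subtype).coprod H.mulVecLin)).prod
        ((E.mulVecLin ∘ₗ S.subtype).coprod Gz.mulVecLin) with hφ₁
    set φ₂ : (Fin m → ℝ) →ₗ[ℝ] ((Fin n → ℝ) ⧸ V) × (Fin r → ℝ) :=
      (V.mkQ ∘ₗ B.mulVecLin).prod Dz.mulVecLin with hφ₂
    have h1 : ∀ z, ψ z = 0 → φ₁ z = 0 := by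
      rintro ⟨⟨x, hx⟩, w⟩ hz
      have hz' : C.mulVec x + Gy.mulVec w = 0 := by
        simpa [hψ, Matrix.mulVecLin_apply] using hz
      have hmem : A.mulVec x + H.mulVec w ∈ S := by
        have := hS x hx w (by simpa [Matrix.mulVecLin_apply] using hz')
        simpa [Matrix.mulVecLin_apply] using this
      have hE : E.mulVec x + Gz.mulVec w = 0 := hb x hx w hz'
      refine Prod.ext ?_ ?_
      · simp [hφ₁, Matrix.mulVecLin_apply, (Submodule.Quotient.mk_eq_zero V).2 (hsv hmem)]
      · simpa [hφ₁, Matrix.mulVecLin_apply] using hE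
    have h2 : ∀ z, ∃ u, φ₁ z + φ₂ u = 0 := by
      rintro ⟨⟨x, hx⟩, w⟩
      obtain ⟨u₁, hu₁V, hu₁E⟩ := hV x (hsv hx)
      obtain ⟨u₂, hu₂V, hu₂E⟩ := ha w
      refine ⟨u₁ + u₂, Prod.ext ?_ ?_⟩
      · have hmem : A.mulVec x + H.mulVec w + B.mulVec (u₁ + u₂) ∈ V := by
          have hu₁V' : A.mulVec x + B.mulVec u₁ ∈ V := by
            simpa [Matrix.mulVecLin_apply] using hu₁V
          have : (A.mulVec x + B.mulVec u₁) + (H.mulVec w + B.mulVec u₂) ∈ V :=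
            V.add_mem hu₁V' hu₂V
          have heq : A.mulVec x + H.mulVec w + B.mulVec (u₁ + u₂)
              = (A.mulVec x + B.mulVec u₁) + (H.mulVec w + B.mulVec u₂) := by
            rw [Matrix.mulVec_add]; abel
          rwa [heq]
        have := (Submodule.Quotient.mk_eq_zero V).2 hmem
        simp only [hφ₁, hφ₂, LinearMap.prod_apply, LinearMap.coprod_apply,
          LinearMap.comp_apply, Submodule.subtype_apply, Matrix.mulVecLin_apply, Function.prod,
          Prod.fst_add, Pi.zero_apply, Prod.fst_zero]
        rw [← map_add]
        simpa using this
      · have hu₁E' : E.mulVec x + Dz.mulVec u₁ = 0 := by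
          simpa [Matrix.mulVecLin_apply] using hu₁E
        have heq : E.mulVec x + Gz.mulVec w + Dz.mulVec (u₁ + u₂)
            = (E.mulVec x + Dz.mulVec u₁) + (Gz.mulVec w + Dz.mulVec u₂) := by
          rw [Matrix.mulVec_add]; abel
        simp only [hφ₁, hφ₂, LinearMap.prod_apply, LinearMap.coprod_apply,
          LinearMap.comp_apply, Submodule.subtype_apply, Matrix.mulVecLin_apply, Function.prod,
          Prod.snd_add, Prod.snd_zero]
        rw [heq, hu₁E', hu₂E, add_zero]
    obtain ⟨Kl, hKl⟩ := key_feedback ψ φ₁ φ₂ h1 h2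
    refine ⟨LinearMap.toMatrix' Kl, ?_⟩
    intro x hx w
    have hKv : ∀ v, (LinearMap.toMatrix' Kl).mulVec v = Kl v := fun v => by
      rw [← Matrix.toLin'_apply, Matrix.toLin'_toMatrix']
    have hz := hKl (⟨x, hx⟩, w)
    have hψz : ψ (⟨x, hx⟩, w) = C.mulVec x + Gy.mulVec w := by
      simp [hψ, Matrix.mulVecLin_apply]
    rw [hψz] at hz
    set y : Fin p → ℝ := C.mulVec x + Gy.mulVec w with hy
    have hz1 := congrArg Prod.fst hz
    have hz2 := congrArg Prod.snd hz
    simp only [hφ₁, hφ₂, LinearMap.prod_apply, LinearMap.coprod_apply, LinearMap.comp_apply,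
      Submodule.subtype_apply, Matrix.mulVecLin_apply, Function.prod, Prod.fst_add, Prod.snd_add,
      Prod.fst_zero, Prod.snd_zero, Pi.zero_apply] at hz1 hz2
    have hmemV : A.mulVec x + H.mulVec w + B.mulVec (Kl y) ∈ V := by
      rw [← Submodule.Quotient.mk_eq_zero V, ← Submodule.mkQ_apply, map_add]
      simpa using hz1
    have hEz : E.mulVec x + Gz.mulVec w + Dz.mulVec (Kl y) = 0 := by
      have heq : E.mulVec x + Gz.mulVec w + Dz.mulVec (Kl y)
          = (E.mulVec x + Gz.mulVec w) + Dz.mulVec (Kl y) := by abel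
      rw [heq]
      have := hz2
      simpa using this
    constructor
    · have heq : (A + B * LinearMap.toMatrix' Kl * C).mulVec x
          + (H + B * LinearMap.toMatrix' Kl * Gy).mulVec w
          = A.mulVec x + H.mulVec w + B.mulVec (Kl y) := by
        simp only [Matrix.add_mulVec, ← Matrix.mulVec_mulVec, hKv, hy, map_add,
          Matrix.mulVec_add]
        abel
      rwa [heq]
    · have heq : (E + Dz * LinearMap.toMatrix' Kl * C).mulVec x
          + (Gz + Dz * LinearMap.toMatrix' Kl * Gy).mulVec w
          = E.mulVec x + Gz.mulVec w + Dz.mulVec (Kl y) := by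
        simp only [Matrix.add_mulVec, ← Matrix.mulVec_mulVec, hKv, hy, map_add,
          Matrix.mulVec_add]
        abel
      rwa [heq]
  · rintro ⟨K, hK⟩
    constructor
    · intro w
      obtain ⟨h1, h2⟩ := hK 0 S.zero_mem w
      refine ⟨(K * Gy).mulVec w, ?_, ?_⟩
      · have : (H + B * K * Gy).mulVec w ∈ V := by
          simpa [Matrix.mulVec_zero] using h1
        have heq : H.mulVec w + B.mulVec ((K * Gy).mulVec w)
            = (H + B * K * Gy).mulVec w := by
          simp [Matrix.add_mulVec, Matrix.mulVec_mulVec, Matrix.mul_assoc]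
        rwa [heq]
      · have h2' : (Gz + Dz * K * Gy).mulVec w = 0 := by
          simpa [Matrix.mulVec_zero] using h2
        have heq : Gz.mulVec w + Dz.mulVec ((K * Gy).mulVec w)
            = (Gz + Dz * K * Gy).mulVec w := by
          simp [Matrix.add_mulVec, Matrix.mulVec_mulVec, Matrix.mul_assoc]
        rwa [heq]
    · intro x hx w hcw
      obtain ⟨_, h2⟩ := hK x hx w
      have heq : (E + Dz * K * C).mulVec x + (Gz + Dz * K * Gy).mulVec w
          = E.mulVec x + Gz.mulVec w
            + (Dz * K).mulVec (C.mulVec x + Gy.mulVec w) := by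
        simp only [Matrix.add_mulVec, Matrix.mulVec_add, ← Matrix.mulVec_mulVec,
          Matrix.mul_assoc]
        abel
      rw [heq, hcw, Matrix.mulVec_zero, add_zero] at h2
      exact h2
end

section
/- DDPDOF is solvable if and only if there exist an (A,B,E,D_z)-output nulling subspace V, an (A,H,C,G_y)-input containing subspace S and a matrix K ∈ ℝ^{m×p} such that (S,V;K) is a solution triple, i.e.: (i) for every w ∈ ℝ^q there exists u ∈ ℝ^m with Hw + Bu ∈ V and G_z w + D_z u = 0; (ii) for every x ∈ S and w ∈ ℝ^q with Cx + G_y w = 0 one has Ex + G_z w = 0; (iii) S ⊆ V; (iv) I + K·D_y is invertible and for all x ∈ S, w ∈ ℝ^q: (A+BKC)x + (H+BK G_y)w ∈ V and (E+D_z K C)x + (G_z + D_z K G_y)w = 0. -/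
section Helpers

lemma eq_zero_of_forall_mulVec {a b : ℕ} (M : Matrix (Fin a) (Fin b) ℝ)
    (h : ∀ v, M.mulVec v = 0) : M = 0 := by
  ext i j
  have h2 := congrFun (h (Pi.single j 1)) i
  rw [Matrix.mulVec_single] at h2
  simpa using h2


lemma toMatrix'_mulVec_eq {n m : ℕ} (f : (Fin n → ℝ) →ₗ[ℝ] (Fin m → ℝ)) (v : Fin n → ℝ) :
    (LinearMap.toMatrix' f).mulVec v = f v := by
  rw [← Matrix.toLin'_apply, Matrix.toLin'_toMatrix']

lemma exists_ON_friend {n m r : ℕ} (A : Matrix (Fin n) (Fin n) ℝ) (B : Matrix (Fin n) (Fin m) ℝ)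
    (E : Matrix (Fin r) (Fin n) ℝ) (Dz : Matrix (Fin r) (Fin m) ℝ) (V : Submodule ℝ (Fin n → ℝ))
    (h : ∀ v ∈ V, ∃ u : Fin m → ℝ, A.mulVec v + B.mulVec u ∈ V ∧ E.mulVec v + Dz.mulVec u = 0) :
    ∃ F : Matrix (Fin m) (Fin n) ℝ,
      (∀ v ∈ V, A.mulVec v + B.mulVec (F.mulVec v) ∈ V) ∧
      (∀ v ∈ V, E.mulVec v + Dz.mulVec (F.mulVec v) = 0) := by
  classical
  set L1 : ((Fin n → ℝ) × (Fin m → ℝ)) →ₗ[ℝ] (Fin n → ℝ) :=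
    A.mulVecLin.comp (LinearMap.fst ℝ _ _) + B.mulVecLin.comp (LinearMap.snd ℝ _ _) with hL1
  set L2 : ((Fin n → ℝ) × (Fin m → ℝ)) →ₗ[ℝ] (Fin r → ℝ) :=
    E.mulVecLin.comp (LinearMap.fst ℝ _ _) + Dz.mulVecLin.comp (LinearMap.snd ℝ _ _) with hL2
  set T : Submodule ℝ ((Fin n → ℝ) × (Fin m → ℝ)) :=
    (V.comap (LinearMap.fst ℝ _ _)) ⊓ (V.comap L1) ⊓ (LinearMap.ker L2) with hT
  have hmemT : ∀ pu : (Fin n → ℝ) × (Fin m → ℝ), pu ∈ T ↔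
      (pu.1 ∈ V ∧ (A.mulVec pu.1 + B.mulVec pu.2 ∈ V)) ∧
        E.mulVec pu.1 + Dz.mulVec pu.2 = 0 := by
    intro pu
    simp [hT, hL1, hL2, Submodule.mem_inf, LinearMap.mem_ker, Matrix.mulVecLin_apply]
  let f : T →ₗ[ℝ] V := LinearMap.codRestrict V ((LinearMap.fst ℝ _ _).comp T.subtype)
      (fun t => ((hmemT t).1 t.2).1.1)
  have hfsurj : LinearMap.range f = ⊤ := by
    rw [LinearMap.range_eq_top]
    rintro ⟨v, hv⟩
    obtain ⟨u, hu1, hu2⟩ := h v hv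
    refine ⟨⟨(v, u), (hmemT _).2 ⟨⟨hv, hu1⟩, hu2⟩⟩, rfl⟩
  obtain ⟨g, hg⟩ := f.exists_rightInverse_of_surjective hfsurj
  obtain ⟨V', hV'⟩ := Submodule.exists_isCompl V
  let P := V.linearProjOfIsCompl V' hV'
  let F0 : (Fin n → ℝ) →ₗ[ℝ] (Fin m → ℝ) :=
    ((LinearMap.snd ℝ _ _).comp T.subtype).comp (g.comp P)
  have key : ∀ v (hv : v ∈ V),
      v ∈ V ∧ (A.mulVec v + B.mulVec (F0 v) ∈ V) ∧ E.mulVec v + Dz.mulVec (F0 v) = 0 := by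
    intro v hv
    have hPv : P v = ⟨v, hv⟩ := Submodule.linearProjOfIsCompl_apply_left hV' ⟨v, hv⟩
    set t : T := g ⟨v, hv⟩ with ht
    have hfg : f t = ⟨v, hv⟩ := by
      have := congrArg (fun φ => φ ⟨v, hv⟩) hg
      simpa [ht] using this
    have h1 : (↑t : (Fin n → ℝ) × (Fin m → ℝ)).1 = v := congrArg Subtype.val hfg
    have hF0 : F0 v = (↑t : (Fin n → ℝ) × (Fin m → ℝ)).2 := by
      simp [F0, hPv, ht]
    have hprop := (hmemT ↑t).1 t.2
    rw [h1] at hprop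
    rw [hF0]
    exact ⟨hv, hprop.1.2, hprop.2⟩
  refine ⟨LinearMap.toMatrix' F0, ?_, ?_⟩
  · intro v hv; rw [toMatrix'_mulVec_eq]; exact (key v hv).2.1
  · intro v hv; rw [toMatrix'_mulVec_eq]; exact (key v hv).2.2

lemma exists_IC_friend {n q p : ℕ} (A : Matrix (Fin n) (Fin n) ℝ) (H : Matrix (Fin n) (Fin q) ℝ)
    (C : Matrix (Fin p) (Fin n) ℝ) (Gy : Matrix (Fin p) (Fin q) ℝ) (S : Submodule ℝ (Fin n → ℝ))
    (h : ∀ x ∈ S, ∀ w : Fin q → ℝ, C.mulVec x + Gy.mulVec w = 0 → A.mulVec x + H.mulVec w ∈ S) :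
    ∃ G : Matrix (Fin n) (Fin p) ℝ,
      (∀ x ∈ S, A.mulVec x + G.mulVec (C.mulVec x) ∈ S) ∧
      (∀ w : Fin q → ℝ, H.mulVec w + G.mulVec (Gy.mulVec w) ∈ S) := by
  classical
  obtain ⟨S', hS'⟩ := Submodule.exists_isCompl S
  set P := S.linearProjOfIsCompl S' hS' with hP
  set Q : (Fin n → ℝ) →ₗ[ℝ] (Fin n → ℝ) := LinearMap.id - S.subtype.comp P with hQ
  have hQmem : ∀ v, v ∈ S ↔ Q v = 0 := by
    intro v
    constructor
    · intro hv
      have : P v = ⟨v, hv⟩ := Submodule.linearProjOfIsCompl_apply_left hS' ⟨v, hv⟩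
      simp [hQ, this]
    · intro hv
      have h1 : v - ↑(P v) = 0 := hv
      have h2 : v = ↑(P v) := by
        have := sub_eq_zero.mp h1; exact this
      exact h2 ▸ (P v).2
  have hQQ : ∀ v, Q (Q v) = Q v := by
    intro v
    have hPQ : P (Q v) = 0 := by
      have h1 : Q v = v - ↑(P v) := rfl
      rw [h1, map_sub]
      have : P ((P v : Fin n → ℝ)) = P v :=
        Submodule.linearProjOfIsCompl_apply_left hS' (P v)
      rw [this, sub_self]
    show Q v - ↑(P (Q v)) = Q v
    rw [hPQ]; simp
  -- domain D = S × ⊤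
  set D : Submodule ℝ ((Fin n → ℝ) × (Fin q → ℝ)) := S.prod ⊤ with hD
  set θ0 : ((Fin n → ℝ) × (Fin q → ℝ)) →ₗ[ℝ] (Fin p → ℝ) :=
    C.mulVecLin.comp (LinearMap.fst ℝ _ _) + Gy.mulVecLin.comp (LinearMap.snd ℝ _ _) with hθ0
  set ζ : ((Fin n → ℝ) × (Fin q → ℝ)) →ₗ[ℝ] (Fin n → ℝ) :=
    Q.comp (A.mulVecLin.comp (LinearMap.fst ℝ _ _) + H.mulVecLin.comp (LinearMap.snd ℝ _ _))
    with hζ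
  set L : Submodule ℝ (Fin p → ℝ) := LinearMap.range (θ0.comp D.subtype) with hL
  let θ : D →ₗ[ℝ] L := LinearMap.codRestrict L (θ0.comp D.subtype)
      (fun d => by rw [hL]; exact LinearMap.mem_range_self _ d)
  have hθsurj : LinearMap.range θ = ⊤ := by
    rw [LinearMap.range_eq_top]
    rintro ⟨y, hy⟩
    obtain ⟨d, hd⟩ := hy
    exact ⟨d, Subtype.ext hd⟩
  obtain ⟨g, hg⟩ := θ.exists_rightInverse_of_surjective hθsurj
  obtain ⟨L', hL'⟩ := Submodule.exists_isCompl L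
  set PL := L.linearProjOfIsCompl L' hL' with hPL
  set G0 : (Fin p → ℝ) →ₗ[ℝ] (Fin n → ℝ) := -((ζ.comp D.subtype).comp (g.comp PL)) with hG0
  have key : ∀ x ∈ S, ∀ w : Fin q → ℝ,
      A.mulVec x + H.mulVec w + G0 (C.mulVec x + Gy.mulVec w) ∈ S := by
    intro x hx w
    have hyL : C.mulVec x + Gy.mulVec w ∈ L := by
      rw [hL]
      exact ⟨⟨(x, w), ⟨hx, trivial⟩⟩, by simp [hθ0, Matrix.mulVecLin_apply]⟩
    set y : Fin p → ℝ := C.mulVec x + Gy.mulVec w with hy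
    have hPLy : PL y = ⟨y, hyL⟩ := Submodule.linearProjOfIsCompl_apply_left hL' ⟨y, hyL⟩
    set d : D := g ⟨y, hyL⟩ with hd
    have hθd : θ d = ⟨y, hyL⟩ := by
      have := congrArg (fun φ => φ ⟨y, hyL⟩) hg
      simpa [hd] using this
    have hθd' : θ0 (↑d : (Fin n → ℝ) × (Fin q → ℝ)) = y := congrArg Subtype.val hθd
    set x' : Fin n → ℝ := (↑d : (Fin n → ℝ) × (Fin q → ℝ)).1 with hx'
    set w' : Fin q → ℝ := (↑d : (Fin n → ℝ) × (Fin q → ℝ)).2 with hw'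
    have hx'S : x' ∈ S := d.2.1
    have hCx' : C.mulVec x' + Gy.mulVec w' = y := by
      simpa [hθ0, Matrix.mulVecLin_apply] using hθd'
    have hG0y : G0 y = -(Q (A.mulVec x' + H.mulVec w')) := by
      simp [hG0, hPLy, hd, hζ, Matrix.mulVecLin_apply]
      rfl
    -- difference lies in S
    have hdiff : A.mulVec (x - x') + H.mulVec (w - w') ∈ S := by
      apply h (x - x') (S.sub_mem hx hx'S) (w - w')
      rw [Matrix.mulVec_sub, Matrix.mulVec_sub]
      have heq : C.mulVec x - C.mulVec x' + (Gy.mulVec w - Gy.mulVec w') =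
          (C.mulVec x + Gy.mulVec w) - (C.mulVec x' + Gy.mulVec w') := by abel
      rw [heq, hCx', ← hy, sub_self]
    rw [hQmem]
    rw [hG0y]
    have hQd : Q (A.mulVec x + H.mulVec w) = Q (A.mulVec x' + H.mulVec w') := by
      have := (hQmem _).mp hdiff
      rw [Matrix.mulVec_sub, Matrix.mulVec_sub] at this
      have h2 : Q ((A.mulVec x + H.mulVec w) - (A.mulVec x' + H.mulVec w')) = 0 := by
        rw [← this]; congr 1; abel
      rw [map_sub, sub_eq_zero] at h2
      exact h2
    rw [map_add, hQd, map_neg, hQQ]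
    abel
  refine ⟨LinearMap.toMatrix' G0, ?_, ?_⟩
  · intro x hx
    have hk := key x hx 0
    simp only [Matrix.mulVec_zero, add_zero] at hk
    rw [toMatrix'_mulVec_eq]
    exact hk
  · intro w
    have hk := key 0 S.zero_mem w
    simp only [Matrix.mulVec_zero, zero_add] at hk
    rw [toMatrix'_mulVec_eq]
    exact hk

lemma key_unit {p m : ℕ} (Dy : Matrix (Fin p) (Fin m) ℝ) (Dc : Matrix (Fin m) (Fin p) ℝ)
    (W : Matrix (Fin p) (Fin p) ℝ) (hW1 : (1 - Dy * Dc) * W = 1) (hW2 : W * (1 - Dy * Dc) = 1) :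
    (1 + Dc * W * Dy) * (1 - Dc * Dy) = 1 ∧ (1 - Dc * Dy) * (1 + Dc * W * Dy) = 1 := by
  have hA : W * (Dy * Dc) = W - 1 := by
    have h6 : W * 1 - W * (Dy * Dc) = 1 := by rw [← Matrix.mul_sub]; exact hW2
    rw [Matrix.mul_one] at h6
    rw [← sub_sub_cancel W 1, ← h6]; abel
  have hB : Dy * Dc * W = W - 1 := by
    have h6 : 1 * W - Dy * Dc * W = 1 := by rw [← Matrix.sub_mul]; exact hW1
    rw [Matrix.one_mul] at h6
    rw [← sub_sub_cancel W 1, ← h6]; abel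
  constructor
  · simp only [Matrix.mul_sub, Matrix.sub_mul, Matrix.mul_add, Matrix.add_mul,
      Matrix.mul_one, Matrix.one_mul, Matrix.mul_assoc]
    have e1 : W * (Dy * (Dc * Dy)) = W * Dy - Dy := by
      rw [← Matrix.mul_assoc Dy Dc Dy, ← Matrix.mul_assoc W (Dy * Dc) Dy, hA,
        Matrix.sub_mul, Matrix.one_mul]
    rw [e1, Matrix.mul_sub]
    abel
  · simp only [Matrix.mul_sub, Matrix.sub_mul, Matrix.mul_add, Matrix.add_mul,
      Matrix.mul_one, Matrix.one_mul, Matrix.mul_assoc]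
    have e1 : Dy * (Dc * (W * Dy)) = W * Dy - Dy := by
      rw [← Matrix.mul_assoc Dc W Dy, ← Matrix.mul_assoc Dy (Dc * W) Dy,
        ← Matrix.mul_assoc Dy Dc W, hB, Matrix.sub_mul, Matrix.one_mul]
    rw [e1, Matrix.mul_sub]
    abel


end Helpers

theorem stmt2 {n m q p r : ℕ}
    (A : Matrix (Fin n) (Fin n) ℝ) (B : Matrix (Fin n) (Fin m) ℝ)
    (H : Matrix (Fin n) (Fin q) ℝ) (C : Matrix (Fin p) (Fin n) ℝ)
    (Dy : Matrix (Fin p) (Fin m) ℝ) (Gy : Matrix (Fin p) (Fin q) ℝ)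
    (E : Matrix (Fin r) (Fin n) ℝ) (Dz : Matrix (Fin r) (Fin m) ℝ)
    (Gz : Matrix (Fin r) (Fin q) ℝ) :
    DDPDOFSolvable A B H C Dy Gy E Dz Gz ↔
      ∃ (S V : Submodule ℝ (Fin n → ℝ)) (K : Matrix (Fin m) (Fin p) ℝ),
        IsSolutionTriple A B H C Dy Gy E Dz Gz S V K := by
  constructor
  · rintro ⟨s, Ac, Bc, Cc, Dc, hU, hGz, hk⟩
    classical
    set W : Matrix (Fin p) (Fin p) ℝ := clW Dy Dc with hWdef
    have hdet : IsUnit (1 - Dy * Dc).det := (Matrix.isUnit_iff_isUnit_det _).mp hU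
    have hW1 : (1 - Dy * Dc) * W = 1 := Matrix.mul_nonsing_inv _ hdet
    have hW2 : W * (1 - Dy * Dc) = 1 := Matrix.nonsing_inv_mul _ hdet
    set Ah := clA A B C Dy Ac Bc Cc Dc with hAhdef
    set Hh := clH B H Dy Gy Bc Dc with hHhdef
    set Ch := clC C Dy E Dz Cc Dc with hChdef
    have hAeq : Ah = Matrix.fromBlocks (A + B * Dc * W * C) (B * Cc + B * Dc * W * Dy * Cc)
        (Bc * W * C) (Ac + Bc * W * Dy * Cc) := rfl
    have hHeq : Hh = Matrix.fromRows (H + B * Dc * W * Gy) (Bc * W * Gy) := rfl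
    have hCeq : Ch = Matrix.fromCols (E + Dz * Dc * W * C)
        (Dz * Cc + Dz * Dc * W * Dy * Cc) := rfl
    have h0 : Gz + Dz * Dc * W * Gy = 0 := hGz
    set R : Submodule ℝ (Fin n ⊕ Fin s → ℝ) :=
      ⨆ k : ℕ, LinearMap.range ((Ah ^ k * Hh).mulVecLin) with hRdef
    have hHR : ∀ w : Fin q → ℝ, Hh.mulVec w ∈ R := by
      intro w
      apply Submodule.mem_iSup_of_mem 0
      exact ⟨w, by simp [Matrix.mulVecLin_apply]⟩
    have hAR : ∀ x ∈ R, Ah.mulVec x ∈ R := by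
      intro x hx
      refine Submodule.iSup_induction _ (motive := fun z => Ah.mulVec z ∈ R) hx ?_ ?_ ?_
      · rintro k z ⟨w, rfl⟩
        apply Submodule.mem_iSup_of_mem (k + 1)
        refine ⟨w, ?_⟩
        simp only [Matrix.mulVecLin_apply, Matrix.mulVec_mulVec]
        rw [← Matrix.mul_assoc, ← pow_succ']
      · simpa using R.zero_mem
      · intro a b ha hb
        rw [Matrix.mulVec_add]
        exact R.add_mem ha hb
    have hCR : ∀ x ∈ R, Ch.mulVec x = 0 := by
      intro x hx
      refine Submodule.iSup_induction _ (motive := fun z => Ch.mulVec z = 0) hx ?_ ?_ ?_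
      · rintro k z ⟨w, rfl⟩
        simp only [Matrix.mulVecLin_apply, Matrix.mulVec_mulVec]
        rw [← Matrix.mul_assoc, hk k, Matrix.zero_mulVec]
      · simp
      · intro a b ha hb; rw [Matrix.mulVec_add, ha, hb, add_zero]
    set piL : (Fin n ⊕ Fin s → ℝ) →ₗ[ℝ] (Fin n → ℝ) := LinearMap.funLeft ℝ ℝ Sum.inl with hpiL
    set emb : (Fin n → ℝ) →ₗ[ℝ] (Fin n ⊕ Fin s → ℝ) :=
      { toFun := fun x => Sum.elim x 0
        map_add' := by intro x y; funext i; cases i <;> simp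
        map_smul' := by intro c x; funext i; cases i <;> simp } with hemb
    have hpiL_apply : ∀ f : Fin n ⊕ Fin s → ℝ, piL f = f ∘ Sum.inl := fun f => rfl
    have hemb_apply : ∀ x : Fin n → ℝ, emb x = Sum.elim x 0 := fun x => rfl
    -- key computations for elements of the form `Sum.elim x 0`
    have hChx : ∀ x : Fin n → ℝ, Ch.mulVec (Sum.elim x 0) = (E + Dz * Dc * W * C).mulVec x := by
      intro x
      rw [hCeq, Matrix.fromCols_mulVec_sumElim, Matrix.mulVec_zero, add_zero]
    refine ⟨R.comap emb, R.map piL, Dc * W, ?_, ?_, ?_, ?_, ?_, ?_, ?_⟩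
    · -- IsInputContaining
      intro x hx u hCxu
      simp only [Matrix.mulVecLin_apply] at hCxu ⊢
      have hmem : Ah.mulVec (Sum.elim x 0) + Hh.mulVec u ∈ R :=
        R.add_mem (hAR _ hx) (hHR u)
      have hBDW : (B * Dc * W * C).mulVec x + (B * Dc * W * Gy).mulVec u = 0 := by
        have := congrArg (fun v => (B * Dc * W).mulVec v) hCxu
        simpa only [Matrix.mulVec_add, Matrix.mulVec_mulVec, Matrix.mulVec_zero,
          Matrix.mul_assoc] using this
      have hBcW : (Bc * W * C).mulVec x + (Bc * W * Gy).mulVec u = 0 := by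
        have := congrArg (fun v => (Bc * W).mulVec v) hCxu
        simpa only [Matrix.mulVec_add, Matrix.mulVec_mulVec, Matrix.mulVec_zero,
          Matrix.mul_assoc] using this
      have htop : ((A + B * Dc * W * C).mulVec x + (B * Cc + B * Dc * W * Dy * Cc).mulVec 0) +
          (H + B * Dc * W * Gy).mulVec u = A.mulVec x + H.mulVec u := by
        simp only [Matrix.mulVec_zero, add_zero, Matrix.add_mulVec, Matrix.mul_assoc]
        simp only [Matrix.mul_assoc] at hBDW
        linear_combination hBDW
      have hbot : ((Bc * W * C).mulVec x + (Ac + Bc * W * Dy * Cc).mulVec 0) +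
          (Bc * W * Gy).mulVec u = 0 := by
        simp only [Matrix.mulVec_zero, add_zero]
        exact hBcW
      have h2 : Ah.mulVec (Sum.elim x 0) + Hh.mulVec u = Sum.elim (A.mulVec x + H.mulVec u) 0 := by
        rw [hAeq, hHeq, Matrix.fromBlocks_mulVec, Matrix.fromRows_mulVec,
          show (Sum.elim x (0 : Fin s → ℝ)) ∘ Sum.inl = x from rfl,
          show (Sum.elim x (0 : Fin s → ℝ)) ∘ Sum.inr = (0 : Fin s → ℝ) from rfl]
        funext i
        cases i with
        | inl i => exact congrFun htop i
        | inr i => exact congrFun hbot i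
      show emb (A.mulVec x + H.mulVec u) ∈ R
      rw [hemb_apply, ← h2]
      exact hmem
    · -- IsOutputNulling
      rintro v ⟨xh, hxh, rfl⟩
      simp only [Matrix.mulVecLin_apply, hpiL_apply]
      refine ⟨(Dc * W * C).mulVec (xh ∘ Sum.inl) +
        (Cc + Dc * W * (Dy * Cc)).mulVec (xh ∘ Sum.inr), ?_, ?_⟩
      · refine ⟨Ah.mulVec xh, hAR _ hxh, ?_⟩
        rw [hpiL_apply, hAeq, Matrix.fromBlocks_mulVec, Sum.elim_comp_inl]
        simp only [Matrix.add_mulVec, Matrix.mulVec_add, Matrix.mulVec_mulVec,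
          Matrix.mul_add, Matrix.mul_assoc]
        abel
      · have hC0 := hCR xh hxh
        rw [hCeq, ← Sum.elim_comp_inl_inr xh, Matrix.fromCols_mulVec_sumElim] at hC0
        simp only [Matrix.add_mulVec, Matrix.mulVec_add, Matrix.mulVec_mulVec,
          Matrix.mul_add, Matrix.mul_assoc] at hC0 ⊢
        linear_combination hC0
    · -- CondAlpha
      intro w
      refine ⟨(Dc * W * Gy).mulVec w, ?_, ?_⟩
      · refine ⟨Hh.mulVec w, hHR w, ?_⟩
        rw [hpiL_apply, hHeq, Matrix.fromRows_mulVec, Sum.elim_comp_inl]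
        simp only [Matrix.add_mulVec, Matrix.mulVec_mulVec, Matrix.mul_assoc]
      · have h2 := congrArg (fun M => M.mulVec w) h0
        simp only [Matrix.add_mulVec, Matrix.zero_mulVec] at h2
        simp only [Matrix.mulVec_mulVec, Matrix.mul_assoc] at h2 ⊢
        exact h2
    · -- CondBeta
      intro x hx w hCw
      have hC0 : (E + Dz * Dc * W * C).mulVec x = 0 := by
        rw [← hChx x]
        exact hCR _ hx
      have h2 := congrArg (fun M => M.mulVec w) h0
      simp only [Matrix.add_mulVec, Matrix.zero_mulVec] at h2
      have h3 := congrArg (fun v => (Dz * Dc * W).mulVec v) hCw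
      simp only [Matrix.mulVec_add, Matrix.mulVec_mulVec, Matrix.mulVec_zero] at h3
      simp only [Matrix.add_mulVec] at hC0
      simp only [Matrix.mul_assoc] at hC0 h2 h3 ⊢
      linear_combination hC0 + h2 - h3
    · -- S ≤ V
      intro x hx
      exact ⟨emb x, hx, rfl⟩
    · -- IsUnit (1 + Dc * W * Dy)
      obtain ⟨key1, key2⟩ := key_unit Dy Dc W hW1 hW2
      exact ⟨⟨1 + Dc * W * Dy, 1 - Dc * Dy, key1, key2⟩, rfl⟩
    · -- final conditions
      intro x hx w
      constructor
      · refine ⟨Ah.mulVec (emb x) + Hh.mulVec w, R.add_mem (hAR _ hx) (hHR w), ?_⟩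
        rw [hpiL_apply]
        have hsplit : (Ah.mulVec (emb x) + Hh.mulVec w) ∘ Sum.inl =
            (Ah.mulVec (emb x)) ∘ Sum.inl + (Hh.mulVec w) ∘ Sum.inl := rfl
        rw [hsplit, hemb_apply, hAeq, hHeq, Matrix.fromBlocks_mulVec, Matrix.fromRows_mulVec]
        simp only [Sum.elim_comp_inl, Sum.elim_comp_inr, Matrix.mulVec_zero, add_zero]
        simp only [Matrix.add_mulVec, Matrix.mulVec_mulVec, Matrix.mul_assoc]
      · have hC0 : (E + Dz * Dc * W * C).mulVec x = 0 := by
          rw [← hChx x]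
          exact hCR _ hx
        have h2 := congrArg (fun M => M.mulVec w) h0
        simp only [Matrix.add_mulVec, Matrix.zero_mulVec] at h2
        simp only [Matrix.add_mulVec] at hC0
        simp only [Matrix.add_mulVec, Matrix.mul_assoc] at hC0 h2 ⊢
        linear_combination hC0 + h2
  · rintro ⟨S, V, K, hIC, hON, halpha, hbeta, hSV, hK, hiv⟩
    classical
    have hdetK : IsUnit (1 + K * Dy).det := (Matrix.isUnit_iff_isUnit_det _).mp hK
    set N : Matrix (Fin m) (Fin m) ℝ := (1 + K * Dy)⁻¹ with hNdef
    have hN1 : (1 + K * Dy) * N = 1 := Matrix.mul_nonsing_inv _ hdetK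
    have hN2 : N * (1 + K * Dy) = 1 := Matrix.nonsing_inv_mul _ hdetK
    have hGzK : Gz + Dz * K * Gy = 0 := by
      apply eq_zero_of_forall_mulVec
      intro w
      have h1 := (hiv 0 S.zero_mem w).2
      simpa [Matrix.mulVec_zero] using h1
    have hES : ∀ x ∈ S, (E + Dz * K * C).mulVec x = 0 := by
      intro x hx
      have h1 := (hiv x hx 0).2
      simpa [Matrix.mulVec_zero] using h1
    have hAS : ∀ x ∈ S, (A + B * K * C).mulVec x ∈ V := by
      intro x hx
      have h1 := (hiv x hx 0).1
      simpa [Matrix.mulVec_zero] using h1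
    have hHV : ∀ w, (H + B * K * Gy).mulVec w ∈ V := by
      intro w
      have h1 := (hiv 0 S.zero_mem w).1
      simpa [Matrix.mulVec_zero] using h1
    -- friends
    have hON' : ∀ v ∈ V, ∃ u : Fin m → ℝ, (A + B * K * C).mulVec v + B.mulVec u ∈ V ∧
        (E + Dz * K * C).mulVec v + Dz.mulVec u = 0 := by
      intro v hv
      obtain ⟨u, hu1, hu2⟩ := hON v hv
      simp only [Matrix.mulVecLin_apply] at hu1 hu2
      refine ⟨u - (K * C).mulVec v, ?_, ?_⟩
      · have heq : (A + B * K * C).mulVec v + B.mulVec (u - (K * C).mulVec v) =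
            A.mulVec v + B.mulVec u := by
          simp only [Matrix.add_mulVec, Matrix.mulVec_sub, Matrix.mulVec_mulVec,
            Matrix.mul_assoc]
          abel
        rw [heq]
        exact hu1
      · have heq : (E + Dz * K * C).mulVec v + Dz.mulVec (u - (K * C).mulVec v) =
            E.mulVec v + Dz.mulVec u := by
          simp only [Matrix.add_mulVec, Matrix.mulVec_sub, Matrix.mulVec_mulVec,
            Matrix.mul_assoc]
          abel
        rw [heq]
        exact hu2
    obtain ⟨F, hF1, hF2⟩ := exists_ON_friend (A + B * K * C) B (E + Dz * K * C) Dz V hON'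
    have hIC' : ∀ x ∈ S, ∀ w : Fin q → ℝ, C.mulVec x + Gy.mulVec w = 0 →
        (A + B * K * C).mulVec x + (H + B * K * Gy).mulVec w ∈ S := by
      intro x hx w hw
      have h1 : A.mulVec x + H.mulVec w ∈ S := hIC x hx w hw
      have heq : (A + B * K * C).mulVec x + (H + B * K * Gy).mulVec w =
          (A.mulVec x + H.mulVec w) + (B * K).mulVec (C.mulVec x + Gy.mulVec w) := by
        simp only [Matrix.add_mulVec, Matrix.mulVec_add, Matrix.mulVec_mulVec,
          Matrix.mul_assoc]
        abel
      rw [heq, hw, Matrix.mulVec_zero, add_zero]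
      exact h1
    obtain ⟨G, hG1, hG2⟩ := exists_IC_friend (A + B * K * C) (H + B * K * Gy) C Gy S hIC'
    -- controller
    set Dc : Matrix (Fin m) (Fin p) ℝ := N * K with hDc
    set Cc : Matrix (Fin m) (Fin n) ℝ := N * F with hCc
    set Bc : Matrix (Fin n) (Fin p) ℝ := -(G * (1 - Dy * Dc)) with hBc
    set Ac : Matrix (Fin n) (Fin n) ℝ :=
      (A + B * K * C) + G * C + B * F + G * (Dy * (N * F)) with hAc
    have hKDyK : K * (1 + Dy * K) = (1 + K * Dy) * K := by
      rw [Matrix.mul_add, Matrix.add_mul, Matrix.mul_one, Matrix.one_mul, Matrix.mul_assoc]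
    have eNK : N * K * (1 + Dy * K) = K := by
      rw [Matrix.mul_assoc N K (1 + Dy * K), hKDyK, ← Matrix.mul_assoc N (1 + K * Dy) K,
        hN2, Matrix.one_mul]
    have i1 : (1 - Dy * Dc) * (1 + Dy * K) = 1 := by
      rw [hDc, Matrix.sub_mul, Matrix.one_mul, Matrix.mul_assoc Dy (N * K) (1 + Dy * K), eNK]
      abel
    have i2 : (1 + Dy * K) * (1 - Dy * Dc) = 1 := by
      have e3 : K * Dy * N = 1 - N := by
        have h4 : N + K * Dy * N = 1 := by
          have h5 := hN1
          rw [Matrix.add_mul, Matrix.one_mul] at h5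
          exact h5
        rw [← h4]
        abel
      have e2 : K * (Dy * (N * K)) = K - N * K := by
        rw [← Matrix.mul_assoc K Dy (N * K), ← Matrix.mul_assoc (K * Dy) N K,
          e3, Matrix.sub_mul, Matrix.one_mul]
      rw [hDc, Matrix.mul_sub, Matrix.mul_one, Matrix.add_mul, Matrix.one_mul,
        Matrix.mul_assoc Dy K (Dy * (N * K)), e2, Matrix.mul_sub]
      abel
    have hUnit : IsUnit (1 - Dy * Dc) := ⟨⟨1 - Dy * Dc, 1 + Dy * K, i1, i2⟩, rfl⟩
    have hWeq : clW Dy Dc = 1 + Dy * K := by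
      show (1 - Dy * Dc)⁻¹ = 1 + Dy * K
      exact Matrix.inv_eq_right_inv i1
    have hDcW : Dc * clW Dy Dc = K := by
      rw [hWeq, hDc]
      exact eNK
    have hBcW : Bc * clW Dy Dc = -G := by
      rw [hWeq, hBc, Matrix.neg_mul, Matrix.mul_assoc, i1, Matrix.mul_one]
    have hKDyCc : (1 + K * Dy) * Cc = F := by
      rw [hCc, ← Matrix.mul_assoc, hN1, Matrix.one_mul]
    have b12 : B * Cc + B * K * Dy * Cc = B * F := by
      rw [← hKDyCc]
      simp only [Matrix.mul_add, Matrix.add_mul, Matrix.one_mul, Matrix.mul_one,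
        Matrix.mul_assoc]
    have b21 : -G * C = -(G * C) := Matrix.neg_mul G C
    have b22 : Ac + -G * Dy * Cc = (A + B * K * C) + G * C + B * F := by
      rw [hAc, hCc]
      simp only [Matrix.neg_mul, Matrix.mul_assoc]
      abel
    have c12 : Dz * Cc + Dz * K * Dy * Cc = Dz * F := by
      rw [← hKDyCc]
      simp only [Matrix.mul_add, Matrix.add_mul, Matrix.one_mul, Matrix.mul_one,
        Matrix.mul_assoc]
    have hAeq : clA A B C Dy Ac Bc Cc Dc = Matrix.fromBlocks (A + B * K * C) (B * F)
        (-(G * C)) ((A + B * K * C) + G * C + B * F) := by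
      unfold clA
      rw [Matrix.mul_assoc B Dc, hDcW, hBcW, b12, b21, b22]
    have hHeq : clH B H Dy Gy Bc Dc = Matrix.fromRows (H + B * K * Gy) (-(G * Gy)) := by
      unfold clH
      rw [Matrix.mul_assoc B Dc, hDcW, hBcW, Matrix.neg_mul]
    have hCeq : clC C Dy E Dz Cc Dc = Matrix.fromCols (E + Dz * K * C) (Dz * F) := by
      unfold clC
      rw [Matrix.mul_assoc Dz Dc, hDcW, c12]
    have hGeq : clG Dy Gy Dz Gz Dc = 0 := by
      unfold clG
      rw [Matrix.mul_assoc Dz Dc, hDcW]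
      exact hGzK
    refine ⟨n, Ac, Bc, Cc, Dc, hUnit, hGeq, ?_⟩
    -- the invariant subspace
    set piL2 : (Fin n ⊕ Fin n → ℝ) →ₗ[ℝ] (Fin n → ℝ) := LinearMap.funLeft ℝ ℝ Sum.inl
      with hpiL2
    set piR2 : (Fin n ⊕ Fin n → ℝ) →ₗ[ℝ] (Fin n → ℝ) := LinearMap.funLeft ℝ ℝ Sum.inr
      with hpiR2
    have hpiL2_app : ∀ f : Fin n ⊕ Fin n → ℝ, piL2 f = f ∘ Sum.inl := fun _ => rfl
    have hdel_app : ∀ f : Fin n ⊕ Fin n → ℝ,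
        (piL2 - piR2) f = f ∘ Sum.inl - f ∘ Sum.inr := fun _ => rfl
    set Vh : Submodule ℝ (Fin n ⊕ Fin n → ℝ) :=
      (V.comap piL2) ⊓ (S.comap (piL2 - piR2)) with hVh
    have hHVh : ∀ w : Fin q → ℝ, (clH B H Dy Gy Bc Dc).mulVec w ∈ Vh := by
      intro w
      rw [hHeq, Matrix.fromRows_mulVec, hVh]
      refine Submodule.mem_inf.mpr ⟨Submodule.mem_comap.mpr ?_, Submodule.mem_comap.mpr ?_⟩
      · rw [hpiL2_app, Sum.elim_comp_inl]
        exact hHV w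
      · rw [hdel_app, Sum.elim_comp_inl, Sum.elim_comp_inr]
        have heq : (H + B * K * Gy).mulVec w - (-(G * Gy)).mulVec w =
            (H + B * K * Gy).mulVec w + G.mulVec (Gy.mulVec w) := by
          rw [Matrix.neg_mulVec, sub_neg_eq_add, Matrix.mulVec_mulVec]
        rw [heq]
        exact hG2 w
    have hAVh : ∀ xh ∈ Vh, (clA A B C Dy Ac Bc Cc Dc).mulVec xh ∈ Vh := by
      intro xh hxh
      obtain ⟨h1, h2⟩ := Submodule.mem_inf.mp hxh
      have hx1V : xh ∘ Sum.inl ∈ V := by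
        have := Submodule.mem_comap.mp h1
        rwa [hpiL2_app] at this
      have he : xh ∘ Sum.inl - xh ∘ Sum.inr ∈ S := by
        have := Submodule.mem_comap.mp h2
        rwa [hdel_app] at this
      have hx2V : xh ∘ Sum.inr ∈ V := by
        have h3 := V.sub_mem hx1V (hSV he)
        rwa [sub_sub_cancel] at h3
      rw [hAeq, Matrix.fromBlocks_mulVec, hVh]
      refine Submodule.mem_inf.mpr ⟨Submodule.mem_comap.mpr ?_, Submodule.mem_comap.mpr ?_⟩
      · rw [hpiL2_app, Sum.elim_comp_inl]
        have heq : (A + B * K * C).mulVec (xh ∘ Sum.inl) + (B * F).mulVec (xh ∘ Sum.inr) =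
            ((A + B * K * C).mulVec (xh ∘ Sum.inr) + B.mulVec (F.mulVec (xh ∘ Sum.inr))) +
              (A + B * K * C).mulVec (xh ∘ Sum.inl - xh ∘ Sum.inr) := by
          simp only [Matrix.mulVec_sub, Matrix.mulVec_mulVec]
          abel
        rw [heq]
        exact V.add_mem (hF1 _ hx2V) (hAS _ he)
      · rw [hdel_app, Sum.elim_comp_inl, Sum.elim_comp_inr]
        have heq : ((A + B * K * C).mulVec (xh ∘ Sum.inl) + (B * F).mulVec (xh ∘ Sum.inr)) -
            ((-(G * C)).mulVec (xh ∘ Sum.inl) +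
              ((A + B * K * C) + G * C + B * F).mulVec (xh ∘ Sum.inr)) =
            (A + B * K * C).mulVec (xh ∘ Sum.inl - xh ∘ Sum.inr) +
              G.mulVec (C.mulVec (xh ∘ Sum.inl - xh ∘ Sum.inr)) := by
          simp only [Matrix.add_mulVec, Matrix.neg_mulVec, Matrix.mulVec_sub,
            Matrix.mulVec_mulVec]
          abel
        rw [heq]
        exact hG1 _ he
    have hCVh : ∀ xh ∈ Vh, (clC C Dy E Dz Cc Dc).mulVec xh = 0 := by
      intro xh hxh
      obtain ⟨h1, h2⟩ := Submodule.mem_inf.mp hxh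
      have hx1V : xh ∘ Sum.inl ∈ V := by
        have := Submodule.mem_comap.mp h1
        rwa [hpiL2_app] at this
      have he : xh ∘ Sum.inl - xh ∘ Sum.inr ∈ S := by
        have := Submodule.mem_comap.mp h2
        rwa [hdel_app] at this
      have hx2V : xh ∘ Sum.inr ∈ V := by
        have h3 := V.sub_mem hx1V (hSV he)
        rwa [sub_sub_cancel] at h3
      rw [hCeq, ← Sum.elim_comp_inl_inr xh, Matrix.fromCols_mulVec_sumElim]
      have heq : (E + Dz * K * C).mulVec (xh ∘ Sum.inl) + (Dz * F).mulVec (xh ∘ Sum.inr) =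
          ((E + Dz * K * C).mulVec (xh ∘ Sum.inr) + Dz.mulVec (F.mulVec (xh ∘ Sum.inr))) +
            (E + Dz * K * C).mulVec (xh ∘ Sum.inl - xh ∘ Sum.inr) := by
        simp only [Matrix.mulVec_sub, Matrix.mulVec_mulVec]
        abel
      rw [heq, hF2 _ hx2V, hES _ he, add_zero]
    intro k
    apply eq_zero_of_forall_mulVec
    intro w
    rw [← Matrix.mulVec_mulVec, ← Matrix.mulVec_mulVec]
    apply hCVh
    induction k with
    | zero =>
      rw [pow_zero, Matrix.one_mulVec]
      exact hHVh w
    | succ k ih =>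
      rw [pow_succ', ← Matrix.mulVec_mulVec]
      exact hAVh _ ih
end

section
/- Assume conditions (α) and (β) hold. Let R̂ denote the smallest self bounded subspace of the quadruple (A,[B S_M],E,[D_z 0]) whose input space is ℝ^m × S_M, input map (u,v) ↦ Bu + v and feedthrough (u,v) ↦ D_z u, assumed to exist. Then S*(A,H,C,G_y) ⊆ V*(A,B,E,D_z) if and only if S_M ⊆ R̂. -/
theorem stmt4 {n m q p r : ℕ}
    (A : Matrix (Fin n) (Fin n) ℝ) (B : Matrix (Fin n) (Fin m) ℝ)
    (H : Matrix (Fin n) (Fin q) ℝ) (C : Matrix (Fin p) (Fin n) ℝ)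
    (Gy : Matrix (Fin p) (Fin q) ℝ)
    (E : Matrix (Fin r) (Fin n) ℝ) (Dz : Matrix (Fin r) (Fin m) ℝ)
    (Gz : Matrix (Fin r) (Fin q) ℝ)
    (Vstar : Submodule ℝ (Fin n → ℝ))
    (hVstar : IsMaxOutputNulling A.mulVecLin B.mulVecLin E.mulVecLin Dz.mulVecLin Vstar)
    (Sstar : Submodule ℝ (Fin n → ℝ))
    (hSstar : IsMinInputContaining A.mulVecLin H.mulVecLin C.mulVecLin Gy.mulVecLin Sstar)
    (Sstar2 : Submodule ℝ (Fin n → ℝ))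
    (hSstar2 : IsMinInputContaining A.mulVecLin H.mulVecLin (C.mulVecLin.prod E.mulVecLin)
      (Gy.mulVecLin.prod Gz.mulVecLin) Sstar2)
    (SM : Submodule ℝ (Fin n → ℝ))
    (hSM : IsMaxSelfHidden A.mulVecLin H.mulVecLin (C.mulVecLin.prod E.mulVecLin)
      (Gy.mulVecLin.prod Gz.mulVecLin) Sstar2 SM)
    (hα : CondAlpha B H Dz Gz Vstar)
    (hβ : CondBeta C Gy E Gz Sstar)
    (VstarHat : Submodule ℝ (Fin n → ℝ))
    (hVstarHat : IsMaxOutputNulling A.mulVecLin (B.mulVecLin.coprod SM.subtype) E.mulVecLin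
      (Dz.mulVecLin.coprod (0 : ↥SM →ₗ[ℝ] (Fin r → ℝ))) VstarHat)
    (Rhat : Submodule ℝ (Fin n → ℝ))
    (hRhat : IsMinSelfBounded A.mulVecLin (B.mulVecLin.coprod SM.subtype) E.mulVecLin
      (Dz.mulVecLin.coprod (0 : ↥SM →ₗ[ℝ] (Fin r → ℝ))) VstarHat Rhat) :
    Sstar ≤ Vstar ↔ SM ≤ Rhat := by
  classical
  -- Step 1: Sstar2 ≤ Sstar
  have h21 : Sstar2 ≤ Sstar := by
    apply hSstar2.2
    intro x hx w hw
    have h1 : C.mulVecLin x + Gy.mulVecLin w = 0 := congrArg Prod.fst hw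
    exact hSstar.1 x hx w h1
  -- Step 2: Sstar ≤ Sstar2
  have h12 : Sstar ≤ Sstar2 := by
    apply hSstar.2
    intro x hx w hw
    have h2 : E.mulVecLin x + Gz.mulVecLin w = 0 := hβ x (h21 hx) w hw
    apply hSstar2.1 x hx w
    have : (C.mulVecLin.prod E.mulVecLin) x + (Gy.mulVecLin.prod Gz.mulVecLin) w
        = (C.mulVecLin x + Gy.mulVecLin w, E.mulVecLin x + Gz.mulVecLin w) := rfl
    rw [this, hw, h2]
    rfl
  -- Step 3: Sstar2 ≤ SM
  have hS2SM : Sstar2 ≤ SM := hSM.2 _ ⟨hSstar2.1, le_sup_left⟩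
  have hSSM : Sstar ≤ SM := h12.trans hS2SM
  constructor
  · intro hSV
    -- V* ⊔ SM is output nulling for the hat quadruple
    have hON : IsOutputNulling A.mulVecLin (B.mulVecLin.coprod SM.subtype) E.mulVecLin
        (Dz.mulVecLin.coprod (0 : ↥SM →ₗ[ℝ] (Fin r → ℝ))) (Vstar ⊔ SM) := by
      intro x hx
      rw [Submodule.mem_sup] at hx
      obtain ⟨a, ha, s, hs, rfl⟩ := hx
      have hs' := hSM.1.2 hs
      rw [Submodule.mem_sup] at hs'
      obtain ⟨p, hp, t, ht, hpt⟩ := hs'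
      have htSM : t ∈ SM := by
        have h' : t = s - p := by rw [← hpt]; abel
        rw [h']; exact sub_mem hs (hS2SM hp)
      rw [Submodule.mem_comap, LinearMap.mem_range] at ht
      obtain ⟨w, hw⟩ := ht
      have hw1 : Gy.mulVecLin w = C.mulVecLin t := congrArg Prod.fst hw
      have hw2 : Gz.mulVecLin w = E.mulVecLin t := congrArg Prod.snd hw
      -- SM is input containing: A t - H w ∈ SM
      have htA : A.mulVecLin t + H.mulVecLin (-w) ∈ SM := by
        apply hSM.1.1 t htSM (-w)
        have : (C.mulVecLin.prod E.mulVecLin) t + (Gy.mulVecLin.prod Gz.mulVecLin) (-w)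
            = (C.mulVecLin t + Gy.mulVecLin (-w), E.mulVecLin t + Gz.mulVecLin (-w)) := rfl
        rw [this, map_neg, map_neg, hw1, hw2]
        simp
      -- condition α at -w
      obtain ⟨u, hu1, hu2⟩ := hα (-w)
      have hu1' : H.mulVecLin (-w) + B.mulVecLin u ∈ Vstar := hu1
      have hu2' : Gz.mulVecLin (-w) + Dz.mulVecLin u = 0 := hu2
      -- V* output nulling at a + p
      have hapV : a + p ∈ Vstar := add_mem ha (hSV (h21 hp))
      obtain ⟨u1, hu11, hu12⟩ := hVstar.1 (a + p) hapV
      refine ⟨(u1 - u, 0), ?_, ?_⟩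
      · have key : A.mulVecLin (a + s) + (B.mulVecLin.coprod SM.subtype) (u1 - u, 0)
            = ((A.mulVecLin (a + p) + B.mulVecLin u1)
                + (-(H.mulVecLin (-w) + B.mulVecLin u)))
              + (A.mulVecLin t + H.mulVecLin (-w)) := by
          have h' : s = p + t := hpt.symm
          rw [h']
          simp only [LinearMap.coprod_apply, Submodule.coe_zero, map_add, map_sub, map_neg,
            map_zero, add_zero]
          abel
        rw [key]
        exact Submodule.add_mem_sup (add_mem hu11 (neg_mem hu1')) htA
      · have key2 : E.mulVecLin (a + s) + (Dz.mulVecLin.coprod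
              (0 : ↥SM →ₗ[ℝ] (Fin r → ℝ))) (u1 - u, 0)
            = ((E.mulVecLin (a + p) + Dz.mulVecLin u1)
                - (Gz.mulVecLin (-w) + Dz.mulVecLin u))
              + (Gz.mulVecLin (-w) + E.mulVecLin t) := by
          have h' : s = p + t := hpt.symm
          rw [h']
          simp only [LinearMap.coprod_apply, LinearMap.zero_apply, map_add, map_sub, map_neg,
            add_zero]
          abel
        rw [key2, hu12, hu2', map_neg, hw2]
        simp
    have hSMVhat : SM ≤ VstarHat := le_trans le_sup_right (hVstarHat.2 _ hON)
    have hSMker : SM ≤ Submodule.map (B.mulVecLin.coprod SM.subtype)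
        (LinearMap.ker (Dz.mulVecLin.coprod (0 : ↥SM →ₗ[ℝ] (Fin r → ℝ)))) := by
      intro v hv
      refine Submodule.mem_map.mpr ⟨(0, ⟨v, hv⟩), ?_, ?_⟩
      · rw [LinearMap.mem_ker]
        simp
      · simp
    exact le_trans (le_inf hSMVhat hSMker) hRhat.1.2
  · intro hSMR
    have hRON : IsOutputNulling A.mulVecLin B.mulVecLin E.mulVecLin Dz.mulVecLin Rhat := by
      intro v hv
      obtain ⟨⟨u, sv⟩, hm, hz⟩ := hRhat.1.1 v hv
      refine ⟨u, ?_, ?_⟩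
      · have h' : A.mulVecLin v + B.mulVecLin u
            = (A.mulVecLin v + (B.mulVecLin.coprod SM.subtype) (u, sv)) - (sv : Fin n → ℝ) := by
          simp only [LinearMap.coprod_apply, Submodule.subtype_apply]
          abel
        rw [h']
        exact sub_mem hm (hSMR sv.2)
      · simpa using hz
    exact hSSM.trans (hSMR.trans (hVstar.2 _ hRON))
end

section
/- Assume conditions (α) and (β) hold. Let π : ℝ^n → ℝ^n/V_m be the canonical projection, and let Q̂ denote the largest self hidden subspace of the quadruple (A,H,[C;π],[G_y;0]) whose output map is x ↦ (Cx, π(x)) and whose feedthrough is w ↦ (G_y w, 0), assumed to exist. Then S*(A,H,C,G_y) ⊆ V*(A,B,E,D_z) if and only if Q̂ ⊆ V_m. -/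
theorem stmt5 {n m q p r : ℕ}
    (A : Matrix (Fin n) (Fin n) ℝ) (B : Matrix (Fin n) (Fin m) ℝ)
    (H : Matrix (Fin n) (Fin q) ℝ) (C : Matrix (Fin p) (Fin n) ℝ)
    (Gy : Matrix (Fin p) (Fin q) ℝ)
    (E : Matrix (Fin r) (Fin n) ℝ) (Dz : Matrix (Fin r) (Fin m) ℝ)
    (Gz : Matrix (Fin r) (Fin q) ℝ)
    (Vstar : Submodule ℝ (Fin n → ℝ))
    (hVstar : IsMaxOutputNulling A.mulVecLin B.mulVecLin E.mulVecLin Dz.mulVecLin Vstar)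
    (Sstar : Submodule ℝ (Fin n → ℝ))
    (hSstar : IsMinInputContaining A.mulVecLin H.mulVecLin C.mulVecLin Gy.mulVecLin Sstar)
    (Vstar1 : Submodule ℝ (Fin n → ℝ))
    (hVstar1 : IsMaxOutputNulling A.mulVecLin (B.mulVecLin.coprod H.mulVecLin) E.mulVecLin
      (Dz.mulVecLin.coprod Gz.mulVecLin) Vstar1)
    (Vm : Submodule ℝ (Fin n → ℝ))
    (hVm : IsMinSelfBounded A.mulVecLin (B.mulVecLin.coprod H.mulVecLin) E.mulVecLin
      (Dz.mulVecLin.coprod Gz.mulVecLin) Vstar1 Vm)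
    (hα : CondAlpha B H Dz Gz Vstar)
    (hβ : CondBeta C Gy E Gz Sstar)
    (SstarHat : Submodule ℝ (Fin n → ℝ))
    (hSstarHat : IsMinInputContaining A.mulVecLin H.mulVecLin (C.mulVecLin.prod Vm.mkQ)
      (Gy.mulVecLin.prod (0 : (Fin q → ℝ) →ₗ[ℝ] ((Fin n → ℝ) ⧸ Vm))) SstarHat)
    (Qhat : Submodule ℝ (Fin n → ℝ))
    (hQhat : IsMaxSelfHidden A.mulVecLin H.mulVecLin (C.mulVecLin.prod Vm.mkQ)
      (Gy.mulVecLin.prod (0 : (Fin q → ℝ) →ₗ[ℝ] ((Fin n → ℝ) ⧸ Vm))) SstarHat Qhat) :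
    Sstar ≤ Vstar ↔ Qhat ≤ Vm := by
  have hV1le : Vstar ≤ Vstar1 := by
    apply hVstar1.2
    intro v hv
    obtain ⟨u, h1, h2⟩ := hVstar.1 v hv
    exact ⟨(u, 0), by simpa using h1, by simpa using h2⟩
  have hV1ge : Vstar1 ≤ Vstar := by
    apply hVstar.2
    intro v hv
    obtain ⟨⟨u, w⟩, h1, h2⟩ := hVstar1.1 v hv
    obtain ⟨u₁, ha1, ha2⟩ := hα w
    refine ⟨u - u₁, ?_, ?_⟩
    · have key : A.mulVecLin v + B.mulVecLin (u - u₁)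
        = (A.mulVecLin v + (B.mulVecLin.coprod H.mulVecLin) (u, w))
          - (H.mulVec w + B.mulVec u₁) := by
        simp [map_sub, Matrix.mulVecLin_apply, LinearMap.coprod_apply]
        abel
      rw [key]
      exact Submodule.sub_mem _ h1 (hV1le ha1)
    · have key : E.mulVecLin v + Dz.mulVecLin (u - u₁)
        = (E.mulVecLin v + (Dz.mulVecLin.coprod Gz.mulVecLin) (u, w))
          - (Gz.mulVec w + Dz.mulVec u₁) := by
        simp [map_sub, Matrix.mulVecLin_apply, LinearMap.coprod_apply]
        abel
      rw [key, h2, ha2, sub_zero]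
  have hVmV1 : Vm ≤ Vstar1 := hVstar1.2 _ hVm.1.1
  have hVmV : Vm ≤ Vstar := hVmV1.trans hV1ge
  -- closure property of the self-bounded subspace Vm
  have hclose : ∀ x ∈ Vm, ∀ w : Fin q → ℝ,
      E.mulVec x + Gz.mulVec w = 0 →
      A.mulVecLin x + H.mulVecLin w ∈ Vstar1 →
      A.mulVecLin x + H.mulVecLin w ∈ Vm := by
    intro x hx w hEz hV1
    obtain ⟨⟨u', w'⟩, h1, h2⟩ := hVm.1.1 x hx
    set d : Fin n → ℝ := (B.mulVecLin.coprod H.mulVecLin) (-u', w - w') with hd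
    have hdker : (Dz.mulVecLin.coprod Gz.mulVecLin) (-u', w - w') = 0 := by
      have : (Dz.mulVecLin.coprod Gz.mulVecLin) (-u', w - w')
          = (E.mulVec x + Gz.mulVec w)
            - (E.mulVecLin x + (Dz.mulVecLin.coprod Gz.mulVecLin) (u', w')) := by
        simp [map_sub, map_neg, Matrix.mulVecLin_apply, LinearMap.coprod_apply]
        abel
      rw [this, hEz, h2, sub_zero]
    have hdeq : A.mulVecLin x + H.mulVecLin w
        = (A.mulVecLin x + (B.mulVecLin.coprod H.mulVecLin) (u', w')) + d := by
      simp [hd, map_sub, map_neg, Matrix.mulVecLin_apply, LinearMap.coprod_apply]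
      abel
    have hdV1 : d ∈ Vstar1 := by
      have : d = (A.mulVecLin x + H.mulVecLin w)
          - (A.mulVecLin x + (B.mulVecLin.coprod H.mulVecLin) (u', w')) := by
        rw [hdeq]; abel
      rw [this]
      exact Submodule.sub_mem _ hV1 (hVmV1 h1)
    have hdVm : d ∈ Vm := by
      apply hVm.1.2
      exact ⟨hdV1, ⟨(-u', w - w'), hdker, rfl⟩⟩
    rw [hdeq]
    exact Submodule.add_mem _ h1 hdVm
  constructor
  · -- S* ≤ V* → Qhat ≤ Vm
    intro hSV
    have hIC : IsInputContaining A.mulVecLin H.mulVecLin (C.mulVecLin.prod Vm.mkQ)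
        (Gy.mulVecLin.prod (0 : (Fin q → ℝ) →ₗ[ℝ] ((Fin n → ℝ) ⧸ Vm))) (Sstar ⊓ Vm) := by
      intro x hx w hw
      have hC : C.mulVecLin x + Gy.mulVecLin w = 0 := by
        have := congrArg Prod.fst hw
        simpa using this
      have hS1 : A.mulVecLin x + H.mulVecLin w ∈ Sstar := hSstar.1 x hx.1 w hC
      have hEz : E.mulVec x + Gz.mulVec w = 0 := by
        apply hβ x hx.1 w
        simpa [Matrix.mulVecLin_apply] using hC
      have hV1 : A.mulVecLin x + H.mulVecLin w ∈ Vstar1 := hV1le (hSV hS1)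
      exact ⟨hS1, hclose x hx.2 w hEz hV1⟩
    have hSle : SstarHat ≤ Vm := (hSstarHat.2 _ hIC).trans inf_le_right
    have hcomap : ((LinearMap.range (Gy.mulVecLin.prod
        (0 : (Fin q → ℝ) →ₗ[ℝ] ((Fin n → ℝ) ⧸ Vm)))).comap
        (C.mulVecLin.prod Vm.mkQ)) ≤ Vm := by
      intro x hx
      obtain ⟨w, hwx⟩ := hx
      have := congrArg Prod.snd hwx
      simp only [LinearMap.prod_apply, LinearMap.zero_apply, Pi.prod] at this
      rw [← Submodule.Quotient.mk_eq_zero Vm]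
      exact this.symm
    exact hQhat.1.2.trans (sup_le hSle hcomap)
  · -- Qhat ≤ Vm → S* ≤ V*
    intro hQ
    have hIC : IsInputContaining A.mulVecLin H.mulVecLin C.mulVecLin Gy.mulVecLin Qhat := by
      intro x hx w hw
      apply hQhat.1.1 x hx w
      have hmk : Vm.mkQ x = 0 := by
        rw [Submodule.mkQ_apply, Submodule.Quotient.mk_eq_zero]
        exact hQ hx
      have : (C.mulVecLin.prod Vm.mkQ) x
          + (Gy.mulVecLin.prod (0 : (Fin q → ℝ) →ₗ[ℝ] ((Fin n → ℝ) ⧸ Vm))) w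
          = (C.mulVecLin x + Gy.mulVecLin w, Vm.mkQ x + 0) := rfl
      rw [this, Prod.mk_eq_zero]
      exact ⟨hw, by simpa using hmk⟩
    exact (hSstar.2 _ hIC).trans (hQ.trans hVmV)
end

section
/- Assume conditions (α) and (β) hold. Then the following three statements are equivalent: (i) S*(A,H,C,G_y) ⊆ V*(A,B,E,D_z); (ii) S_M ⊆ V*(A,B,E,D_z); (iii) S*(A,H,C,G_y) ⊆ V_m. -/
theorem stmt6 {n m q p r : ℕ}
    (A : Matrix (Fin n) (Fin n) ℝ) (B : Matrix (Fin n) (Fin m) ℝ)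
    (H : Matrix (Fin n) (Fin q) ℝ) (C : Matrix (Fin p) (Fin n) ℝ)
    (Gy : Matrix (Fin p) (Fin q) ℝ)
    (E : Matrix (Fin r) (Fin n) ℝ) (Dz : Matrix (Fin r) (Fin m) ℝ)
    (Gz : Matrix (Fin r) (Fin q) ℝ)
    (Vstar : Submodule ℝ (Fin n → ℝ))
    (hVstar : IsMaxOutputNulling A.mulVecLin B.mulVecLin E.mulVecLin Dz.mulVecLin Vstar)
    (Sstar : Submodule ℝ (Fin n → ℝ))
    (hSstar : IsMinInputContaining A.mulVecLin H.mulVecLin C.mulVecLin Gy.mulVecLin Sstar)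
    (Vstar1 : Submodule ℝ (Fin n → ℝ))
    (hVstar1 : IsMaxOutputNulling A.mulVecLin (B.mulVecLin.coprod H.mulVecLin) E.mulVecLin
      (Dz.mulVecLin.coprod Gz.mulVecLin) Vstar1)
    (Vm : Submodule ℝ (Fin n → ℝ))
    (hVm : IsMinSelfBounded A.mulVecLin (B.mulVecLin.coprod H.mulVecLin) E.mulVecLin
      (Dz.mulVecLin.coprod Gz.mulVecLin) Vstar1 Vm)
    (Sstar2 : Submodule ℝ (Fin n → ℝ))
    (hSstar2 : IsMinInputContaining A.mulVecLin H.mulVecLin (C.mulVecLin.prod E.mulVecLin)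
      (Gy.mulVecLin.prod Gz.mulVecLin) Sstar2)
    (SM : Submodule ℝ (Fin n → ℝ))
    (hSM : IsMaxSelfHidden A.mulVecLin H.mulVecLin (C.mulVecLin.prod E.mulVecLin)
      (Gy.mulVecLin.prod Gz.mulVecLin) Sstar2 SM)
    (hα : CondAlpha B H Dz Gz Vstar)
    (hβ : CondBeta C Gy E Gz Sstar) :
    (Sstar ≤ Vstar ↔ SM ≤ Vstar) ∧ (Sstar ≤ Vstar ↔ Sstar ≤ Vm) := by
  obtain ⟨hV_ON, hV_max⟩ := hVstar
  obtain ⟨hS_IC, hS_min⟩ := hSstar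
  obtain ⟨hV1_ON, hV1_max⟩ := hVstar1
  obtain ⟨⟨hVm_ON, hVm_sb⟩, hVm_min⟩ := hVm
  obtain ⟨hS2_IC, hS2_min⟩ := hSstar2
  obtain ⟨⟨hSM_IC, hSM_sh⟩, hSM_max⟩ := hSM
  -- Vstar ≤ Vstar1
  have hVV1 : Vstar ≤ Vstar1 := by
    apply hV1_max
    intro v hv
    obtain ⟨u, h1, h2⟩ := hV_ON v hv
    exact ⟨(u, 0), by simpa using h1, by simpa using h2⟩
  -- Vstar1 ≤ Vstar (uses α)
  have hV1V : Vstar1 ≤ Vstar := by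
    apply hV_max
    intro v hv
    obtain ⟨⟨u, w⟩, h1, h2⟩ := hV1_ON v hv
    obtain ⟨u', ha1, ha2⟩ := hα w
    simp only [LinearMap.coprod_apply, Matrix.mulVecLin_apply] at h1 h2
    refine ⟨u - u', ?_, ?_⟩
    · simp only [Matrix.mulVecLin_apply]
      have key : A.mulVec v + B.mulVec (u - u') =
          (A.mulVec v + (B.mulVec u + H.mulVec w)) - (H.mulVec w + B.mulVec u') := by
        rw [Matrix.mulVec_sub]; abel
      rw [key]
      exact Vstar1.sub_mem h1 (hVV1 ha1)
    · simp only [Matrix.mulVecLin_apply]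
      have key : E.mulVec v + Dz.mulVec (u - u') =
          (E.mulVec v + (Dz.mulVec u + Gz.mulVec w)) - (Gz.mulVec w + Dz.mulVec u') := by
        rw [Matrix.mulVec_sub]; abel
      rw [key, h2, ha2, sub_zero]
  -- Sstar2 ≤ Sstar
  have hS2S : Sstar2 ≤ Sstar := by
    apply hS2_min
    intro x hx w hw
    simp only [LinearMap.prod_apply, Matrix.mulVecLin_apply, Function.prod, Prod.mk_add_mk,
      Prod.mk_eq_zero] at hw
    apply hS_IC x hx w
    simp only [Matrix.mulVecLin_apply]
    exact hw.1
  -- Sstar ≤ Sstar2 (uses β)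
  have hSS2 : Sstar ≤ Sstar2 := by
    apply hS_min
    intro x hx w hw
    simp only [Matrix.mulVecLin_apply] at hw
    have hE : E.mulVec x + Gz.mulVec w = 0 := hβ x (hS2S hx) w hw
    apply hS2_IC x hx w
    simp only [LinearMap.prod_apply, Matrix.mulVecLin_apply, Function.prod, Prod.mk_add_mk,
      Prod.mk_eq_zero]
    exact ⟨hw, hE⟩
  -- Sstar is input containing for the extended quadruple
  have hS_IC2 : IsInputContaining A.mulVecLin H.mulVecLin (C.mulVecLin.prod E.mulVecLin)
      (Gy.mulVecLin.prod Gz.mulVecLin) Sstar := by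
    intro x hx w hw
    simp only [LinearMap.prod_apply, Matrix.mulVecLin_apply, Function.prod, Prod.mk_add_mk,
      Prod.mk_eq_zero] at hw
    apply hS_IC x hx w
    simp only [Matrix.mulVecLin_apply]
    exact hw.1
  -- Sstar ≤ SM
  have hSSM : Sstar ≤ SM := hSM_max Sstar ⟨hS_IC2, hSS2.trans le_sup_left⟩
  -- Vm ≤ Vstar
  have hVmV1 : Vm ≤ Vstar1 := hV1_max Vm hVm_ON
  have hVmV : Vm ≤ Vstar := hVmV1.trans hV1V
  -- (i) → (iii)
  have key1 : Sstar ≤ Vstar → Sstar ≤ Vm := by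
    intro hi
    have hsub : Sstar ≤ Sstar ⊓ Vm := by
      apply hS_min
      intro x hx w hw
      simp only [Matrix.mulVecLin_apply] at hw
      obtain ⟨hx1, hx2⟩ := Submodule.mem_inf.mp hx
      have hmemS : A.mulVec x + H.mulVec w ∈ Sstar := by
        have := hS_IC x hx1 w (by simp only [Matrix.mulVecLin_apply]; exact hw)
        simpa using this
      have hE : E.mulVec x + Gz.mulVec w = 0 := hβ x hx1 w hw
      obtain ⟨⟨u', w'⟩, h1, h2⟩ := hVm_ON x hx2
      simp only [LinearMap.coprod_apply, Matrix.mulVecLin_apply] at h1 h2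
      set h := (A.mulVec x + H.mulVec w) - (A.mulVec x + (B.mulVec u' + H.mulVec w')) with hdef
      have hker : (-u', w - w') ∈ LinearMap.ker (Dz.mulVecLin.coprod Gz.mulVecLin) := by
        rw [LinearMap.mem_ker]
        simp only [LinearMap.coprod_apply, Matrix.mulVecLin_apply]
        have : Dz.mulVec (-u') + Gz.mulVec (w - w') =
            (E.mulVec x + Gz.mulVec w) - (E.mulVec x + (Dz.mulVec u' + Gz.mulVec w')) := by
          rw [Matrix.mulVec_neg, Matrix.mulVec_sub]; abel
        rw [this, hE, h2, sub_zero]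
      have hmap : h ∈ (LinearMap.ker (Dz.mulVecLin.coprod Gz.mulVecLin)).map
          (B.mulVecLin.coprod H.mulVecLin) := by
        refine Submodule.mem_map.mpr ⟨(-u', w - w'), hker, ?_⟩
        simp only [LinearMap.coprod_apply, Matrix.mulVecLin_apply, hdef]
        rw [Matrix.mulVec_neg, Matrix.mulVec_sub]; abel
      have hh1 : h ∈ Vstar1 :=
        Vstar1.sub_mem (hVV1 (hi hmemS)) (hVmV1 h1)
      have hhVm : h ∈ Vm := hVm_sb (Submodule.mem_inf.mpr ⟨hh1, hmap⟩)
      have hmemV : A.mulVec x + H.mulVec w ∈ Vm := by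
        have : A.mulVec x + H.mulVec w = (A.mulVec x + (B.mulVec u' + H.mulVec w')) + h := by
          rw [hdef]; abel
        rw [this]
        exact Vm.add_mem h1 hhVm
      simp only [Matrix.mulVecLin_apply]
      exact Submodule.mem_inf.mpr ⟨hmemS, hmemV⟩
    exact hsub.trans inf_le_right
  -- (i) → (ii)
  have key2 : Sstar ≤ Vstar → SM ≤ Vstar := by
    intro hi
    have hON : IsOutputNulling A.mulVecLin B.mulVecLin E.mulVecLin Dz.mulVecLin (Vstar ⊔ SM) := by
      intro v hv
      obtain ⟨v0, hv0, x, hx, rfl⟩ := Submodule.mem_sup.mp hv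
      obtain ⟨u0, h01, h02⟩ := hV_ON v0 hv0
      have hxd := hSM_sh hx
      obtain ⟨x1, hx1, x2, hx2, rfl⟩ := Submodule.mem_sup.mp hxd
      have hx1S : x1 ∈ Sstar := hS2S hx1
      obtain ⟨u1, h11, h12⟩ := hV_ON x1 (hi hx1S)
      -- x2 ∈ SM
      have hx2SM : x2 ∈ SM := by
        have : x2 = (x1 + x2) - x1 := by abel
        rw [this]
        exact SM.sub_mem hx (hSSM hx1S)
      -- extract w2 from the comap condition
      simp only [Submodule.mem_comap, LinearMap.mem_range, LinearMap.prod_apply, Function.prod,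
        Matrix.mulVecLin_apply, Prod.mk.injEq] at hx2
      obtain ⟨w2, hw21, hw22⟩ := hx2
      -- propagate x2 inside SM
      have hprop : A.mulVec x2 - H.mulVec w2 ∈ SM := by
        have := hSM_IC x2 hx2SM (-w2) (by
          simp only [LinearMap.prod_apply, Matrix.mulVecLin_apply, Function.prod, Prod.mk_add_mk,
            Prod.mk_eq_zero]
          constructor
          · rw [Matrix.mulVec_neg, ← hw21]; abel
          · rw [Matrix.mulVec_neg, ← hw22]; abel)
        simp only [Matrix.mulVecLin_apply, Matrix.mulVec_neg] at this
        rw [sub_eq_add_neg]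
        exact this
      obtain ⟨u2, ha1, ha2⟩ := hα w2
      refine ⟨u0 + u1 + u2, ?_, ?_⟩
      · simp only [Matrix.mulVecLin_apply]
        have key : A.mulVec (v0 + (x1 + x2)) + B.mulVec (u0 + u1 + u2) =
            (A.mulVec v0 + B.mulVec u0) + (A.mulVec x1 + B.mulVec u1) +
              ((A.mulVec x2 - H.mulVec w2) + (H.mulVec w2 + B.mulVec u2)) := by
          rw [Matrix.mulVec_add, Matrix.mulVec_add, Matrix.mulVec_add, Matrix.mulVec_add]; abel
        rw [key]
        have m1 : A.mulVec v0 + B.mulVec u0 ∈ Vstar ⊔ SM := Submodule.mem_sup_left (by simpa using h01)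
        have m2 : A.mulVec x1 + B.mulVec u1 ∈ Vstar ⊔ SM := Submodule.mem_sup_left (by simpa using h11)
        have m3 : (A.mulVec x2 - H.mulVec w2) + (H.mulVec w2 + B.mulVec u2) ∈ Vstar ⊔ SM :=
          Submodule.add_mem _ (Submodule.mem_sup_right hprop) (Submodule.mem_sup_left ha1)
        exact Submodule.add_mem _ (Submodule.add_mem _ m1 m2) m3
      · simp only [Matrix.mulVecLin_apply]
        have key : E.mulVec (v0 + (x1 + x2)) + Dz.mulVec (u0 + u1 + u2) =
            (E.mulVec v0 + Dz.mulVec u0) + (E.mulVec x1 + Dz.mulVec u1) +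
              (Gz.mulVec w2 + Dz.mulVec u2) := by
          rw [Matrix.mulVec_add, Matrix.mulVec_add, Matrix.mulVec_add, Matrix.mulVec_add, ← hw22]
          abel
        rw [key]
        simp only [Matrix.mulVecLin_apply] at h02 h12
        rw [h02, h12, ha2]
        simp
    have : Vstar ⊔ SM ≤ Vstar := hV_max _ hON
    exact le_sup_right.trans this
  exact ⟨⟨fun hi => key2 hi, fun h => hSSM.trans h⟩, ⟨fun hi => key1 hi, fun h => h.trans hVmV⟩⟩
end

section
/- Assume conditions (α) and (β) hold and that S*(A,H,C,G_y) ⊆ V*(A,B,E,D_z). Let S be an (A,H,C,G_y)-input containing subspace with V_m ∩ S_M ⊆ S ⊆ S_M. Then S + V_m is an (A,B,E,D_z)-self bounded subspace. -/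
theorem stmt7 {n m q p r : ℕ}
    (A : Matrix (Fin n) (Fin n) ℝ) (B : Matrix (Fin n) (Fin m) ℝ)
    (H : Matrix (Fin n) (Fin q) ℝ) (C : Matrix (Fin p) (Fin n) ℝ)
    (Gy : Matrix (Fin p) (Fin q) ℝ)
    (E : Matrix (Fin r) (Fin n) ℝ) (Dz : Matrix (Fin r) (Fin m) ℝ)
    (Gz : Matrix (Fin r) (Fin q) ℝ)
    (Vstar : Submodule ℝ (Fin n → ℝ))
    (hVstar : IsMaxOutputNulling A.mulVecLin B.mulVecLin E.mulVecLin Dz.mulVecLin Vstar)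
    (Sstar : Submodule ℝ (Fin n → ℝ))
    (hSstar : IsMinInputContaining A.mulVecLin H.mulVecLin C.mulVecLin Gy.mulVecLin Sstar)
    (Vstar1 : Submodule ℝ (Fin n → ℝ))
    (hVstar1 : IsMaxOutputNulling A.mulVecLin (B.mulVecLin.coprod H.mulVecLin) E.mulVecLin
      (Dz.mulVecLin.coprod Gz.mulVecLin) Vstar1)
    (Vm : Submodule ℝ (Fin n → ℝ))
    (hVm : IsMinSelfBounded A.mulVecLin (B.mulVecLin.coprod H.mulVecLin) E.mulVecLin
      (Dz.mulVecLin.coprod Gz.mulVecLin) Vstar1 Vm)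
    (Sstar2 : Submodule ℝ (Fin n → ℝ))
    (hSstar2 : IsMinInputContaining A.mulVecLin H.mulVecLin (C.mulVecLin.prod E.mulVecLin)
      (Gy.mulVecLin.prod Gz.mulVecLin) Sstar2)
    (SM : Submodule ℝ (Fin n → ℝ))
    (hSM : IsMaxSelfHidden A.mulVecLin H.mulVecLin (C.mulVecLin.prod E.mulVecLin)
      (Gy.mulVecLin.prod Gz.mulVecLin) Sstar2 SM)
    (hα : CondAlpha B H Dz Gz Vstar)
    (hβ : CondBeta C Gy E Gz Sstar)
    (hSV : Sstar ≤ Vstar)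
    (S : Submodule ℝ (Fin n → ℝ))
    (hS : IsInputContaining A.mulVecLin H.mulVecLin C.mulVecLin Gy.mulVecLin S)
    (hS1 : Vm ⊓ SM ≤ S) (hS2 : S ≤ SM) :
    IsSelfBounded A.mulVecLin B.mulVecLin E.mulVecLin Dz.mulVecLin Vstar (S ⊔ Vm) := by
  classical
  -- abbreviations
  -- Step 1: Vstar ≤ Vstar1
  have hVs1 : Vstar ≤ Vstar1 := by
    apply hVstar1.2
    intro v hv
    obtain ⟨u, h1, h2⟩ := hVstar.1 v hv
    exact ⟨(u, 0), by simpa using h1, by simpa using h2⟩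
  have hVmV1 : Vm ≤ Vstar1 := hVstar1.2 _ hVm.1.1
  -- Step 2: Vstar1 ≤ Vstar (uses α)
  have hV1s : Vstar1 ≤ Vstar := by
    apply hVstar.2
    intro v hv
    obtain ⟨⟨u, w⟩, hin, hout⟩ := hVstar1.1 v hv
    obtain ⟨u₁, ha1, ha2⟩ := hα (-w)
    have ha1' : H.mulVecLin (-w) + B.mulVecLin u₁ ∈ Vstar := ha1
    have ha2' : Gz.mulVecLin (-w) + Dz.mulVecLin u₁ = 0 := ha2
    refine ⟨u + u₁, ?_, ?_⟩
    · have key : A.mulVecLin v + B.mulVecLin (u + u₁)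
          = (A.mulVecLin v + (B.mulVecLin.coprod H.mulVecLin) (u, w))
            + (H.mulVecLin (-w) + B.mulVecLin u₁) := by
        simp only [LinearMap.coprod_apply, map_add, map_neg]
        abel
      rw [key]
      exact Vstar1.add_mem hin (hVs1 ha1')
    · have key : E.mulVecLin v + Dz.mulVecLin (u + u₁)
          = (E.mulVecLin v + (Dz.mulVecLin.coprod Gz.mulVecLin) (u, w))
            + (Gz.mulVecLin (-w) + Dz.mulVecLin u₁) := by
        simp only [LinearMap.coprod_apply, map_add, map_neg]
        abel
      rw [key, hout, ha2', add_zero]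
  -- Step 3: strengthened α : lands in Vm
  have hα' : ∀ w : Fin q → ℝ, ∃ u : Fin m → ℝ,
      H.mulVecLin w + B.mulVecLin u ∈ Vm ∧ Gz.mulVecLin w + Dz.mulVecLin u = 0 := by
    intro w
    obtain ⟨u, ha1, ha2⟩ := hα w
    have ha1' : H.mulVecLin w + B.mulVecLin u ∈ Vstar := ha1
    have ha2' : Gz.mulVecLin w + Dz.mulVecLin u = 0 := ha2
    refine ⟨u, hVm.1.2 ⟨hVs1 ha1', ?_⟩, ha2'⟩
    refine Submodule.mem_map.mpr ⟨(u, w), LinearMap.mem_ker.mpr ?_, ?_⟩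
    · show Dz.mulVecLin u + Gz.mulVecLin w = 0
      rw [add_comm]; exact ha2'
    · show B.mulVecLin u + H.mulVecLin w = H.mulVecLin w + B.mulVecLin u
      rw [add_comm]
  -- Step 4: Vm is (A,B,E,Dz)-output nulling
  have hVmON : ∀ v ∈ Vm, ∃ u₂ : Fin m → ℝ,
      A.mulVecLin v + B.mulVecLin u₂ ∈ Vm ∧ E.mulVecLin v + Dz.mulVecLin u₂ = 0 := by
    intro v hv
    obtain ⟨⟨u, w⟩, hin, hout⟩ := hVm.1.1 v hv
    obtain ⟨u₁, hm1, hm2⟩ := hα' (-w)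
    refine ⟨u + u₁, ?_, ?_⟩
    · have key : A.mulVecLin v + B.mulVecLin (u + u₁)
          = (A.mulVecLin v + (B.mulVecLin.coprod H.mulVecLin) (u, w))
            + (H.mulVecLin (-w) + B.mulVecLin u₁) := by
        simp only [LinearMap.coprod_apply, map_add, map_neg]
        abel
      rw [key]
      exact Vm.add_mem hin hm1
    · have key : E.mulVecLin v + Dz.mulVecLin (u + u₁)
          = (E.mulVecLin v + (Dz.mulVecLin.coprod Gz.mulVecLin) (u, w))
            + (Gz.mulVecLin (-w) + Dz.mulVecLin u₁) := by
        simp only [LinearMap.coprod_apply, map_add, map_neg]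
        abel
      rw [key, hout, hm2, add_zero]
  -- Step 5: Sstar2 ≤ Sstar
  have hS2S : Sstar2 ≤ Sstar := by
    apply hSstar2.2
    intro x hx w hw
    exact hSstar.1 x hx w (by simpa using congrArg Prod.fst hw)
  -- Step 6: Sstar ≤ Vm (the key step)
  have hSVm : Sstar ≤ Vm := by
    have hkey : Sstar ≤ Sstar ⊓ Vm := by
      apply hSstar.2
      intro x hx w hw
      have hxS : x ∈ Sstar := hx.1
      have hxV : x ∈ Vm := hx.2
      have hy : A.mulVecLin x + H.mulVecLin w ∈ Sstar := hSstar.1 x hxS w hw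
      have hβx : E.mulVecLin x + Gz.mulVecLin w = 0 := hβ x hxS w hw
      obtain ⟨⟨u₀, w₀⟩, hin, hout⟩ := hVm.1.1 x hxV
      have hd : A.mulVecLin x + H.mulVecLin w
          = (A.mulVecLin x + (B.mulVecLin.coprod H.mulVecLin) (u₀, w₀))
            + (B.mulVecLin.coprod H.mulVecLin) (-u₀, w - w₀) := by
        simp only [LinearMap.coprod_apply, map_add, map_neg, map_sub]
        abel
      refine ⟨hy, ?_⟩
      rw [hd]
      refine Vm.add_mem hin (hVm.1.2 ⟨?_, ?_⟩)
      · have hd2 : (B.mulVecLin.coprod H.mulVecLin) (-u₀, w - w₀)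
            = (A.mulVecLin x + H.mulVecLin w)
              - (A.mulVecLin x + (B.mulVecLin.coprod H.mulVecLin) (u₀, w₀)) := by
          simp only [LinearMap.coprod_apply, map_add, map_neg, map_sub]
          abel
        rw [hd2]
        exact Vstar1.sub_mem (hVs1 (hSV hy)) (hVmV1 hin)
      · refine Submodule.mem_map.mpr ⟨(-u₀, w - w₀), LinearMap.mem_ker.mpr ?_, rfl⟩
        have hd3 : (Dz.mulVecLin.coprod Gz.mulVecLin) (-u₀, w - w₀)
            = (E.mulVecLin x + Gz.mulVecLin w)
              - (E.mulVecLin x + (Dz.mulVecLin.coprod Gz.mulVecLin) (u₀, w₀)) := by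
          simp only [LinearMap.coprod_apply, map_add, map_neg, map_sub]
          abel
        rw [hd3, hβx, hout, sub_zero]
    exact hkey.trans inf_le_right
  -- Step 7: Sstar ≤ S
  have hSstarS : Sstar ≤ S := hSstar.2 S hS
  -- Main goal
  constructor
  · -- output nulling of S ⊔ Vm
    intro v hv
    obtain ⟨x, hxS, v₂, hv₂, rfl⟩ := Submodule.mem_sup.mp hv
    have hxdec := hSM.1.2 (hS2 hxS)
    obtain ⟨s, hs, y, hy, hxy⟩ := Submodule.mem_sup.mp hxdec
    have hsS : s ∈ Sstar := hS2S hs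
    obtain ⟨w₀, hw₀⟩ := Submodule.mem_comap.mp hy
    have hCy : C.mulVecLin y = Gy.mulVecLin w₀ := by
      have := congrArg Prod.fst hw₀; simpa using this.symm
    have hEy : E.mulVecLin y = Gz.mulVecLin w₀ := by
      have := congrArg Prod.snd hw₀; simpa using this.symm
    have hyS : y ∈ S := by
      have hxy2 : y = x - s := by rw [← hxy]; abel
      rw [hxy2]
      exact S.sub_mem hxS (hSstarS hsS)
    have hstep : A.mulVecLin y + H.mulVecLin (-w₀) ∈ S := by
      refine hS y hyS (-w₀) ?_
      rw [map_neg, hCy, add_neg_cancel]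
    obtain ⟨u, hu1, hu2⟩ := hα' w₀
    obtain ⟨u', hu'1, hu'2⟩ := hVmON s (hSVm hsS)
    obtain ⟨u₂, hu₂1, hu₂2⟩ := hVmON v₂ hv₂
    refine ⟨u + u' + u₂, ?_, ?_⟩
    · have key : A.mulVecLin (x + v₂) + B.mulVecLin (u + u' + u₂)
          = ((A.mulVecLin y + H.mulVecLin (-w₀)) + (H.mulVecLin w₀ + B.mulVecLin u))
            + ((A.mulVecLin s + B.mulVecLin u') + (A.mulVecLin v₂ + B.mulVecLin u₂)) := by
        rw [← hxy]
        simp only [map_add, map_neg]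
        abel
      rw [key]
      exact add_mem
        (add_mem ((le_sup_left : S ≤ S ⊔ Vm) hstep) ((le_sup_right : Vm ≤ S ⊔ Vm) hu1))
        (add_mem ((le_sup_right : Vm ≤ S ⊔ Vm) hu'1) ((le_sup_right : Vm ≤ S ⊔ Vm) hu₂1))
    · have key : E.mulVecLin (x + v₂) + Dz.mulVecLin (u + u' + u₂)
          = (E.mulVecLin y + Dz.mulVecLin u)
            + ((E.mulVecLin s + Dz.mulVecLin u') + (E.mulVecLin v₂ + Dz.mulVecLin u₂)) := by
        rw [← hxy]
        simp only [map_add]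
        abel
      rw [key, hEy, hu2, hu'2, hu₂2, add_zero, add_zero]
  · -- Vstar ⊓ B(ker Dz) ≤ S ⊔ Vm
    intro x hx
    rw [Submodule.mem_inf] at hx
    obtain ⟨hx1, hx2⟩ := hx
    obtain ⟨u, hu, rfl⟩ := Submodule.mem_map.mp hx2
    refine (le_sup_right : Vm ≤ S ⊔ Vm) (hVm.1.2 ⟨hVs1 hx1, ?_⟩)
    refine Submodule.mem_map.mpr ⟨(u, 0), LinearMap.mem_ker.mpr ?_, ?_⟩
    · show Dz.mulVecLin u + Gz.mulVecLin 0 = 0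
      rw [map_zero, add_zero]
      exact LinearMap.mem_ker.mp hu
    · show B.mulVecLin u + H.mulVecLin 0 = B.mulVecLin u
      rw [map_zero, add_zero]
end
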